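/- arXiv:1901.08961 — 3 statements merged into one kernel-verified Lean document; each statement's English description precedes it below -/
import Mathlib

section
/- Let 𝒯₀ be an E-closed family of complete theories and let 𝒯₀' ⊆ 𝒯₀ be a generating set for 𝒯₀, i.e., Cl_E(𝒯₀') = 𝒯₀. Then the following are equivalent: (1) 𝒯₀' is the least generating set for 𝒯₀, i.e., 𝒯₀' is contained in every 𝒯'' ⊆ 𝒯₀ with Cl_E(𝒯'') = 𝒯₀; (2) 𝒯₀' is a minimal generating set for 𝒯₀, i.e., no proper subset of 𝒯₀' generates 𝒯₀; (3) every T ∈ 𝒯₀' contains a sentence φ with (𝒯₀')_φ = {T}; (4) every T ∈ 𝒯₀' contains a sentence φ with (𝒯₀)_φ = {T}; (5) every T ∈ 𝒯₀' contains a finite disjunction of 𝒯₀'-complete sentences; (6) every T ∈ 𝒯₀' contains a finite disjunction of 𝒯₀-complete sentences. -/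
open FirstOrder Language Set

universe u v

namespace Approx

variable {L : FirstOrder.Language.{u, v}}

/-- A complete theory: a satisfiable set of sentences deciding every sentence. -/
def CompleteTheory (T : L.Theory) : Prop :=
  T.IsSatisfiable ∧ ∀ φ : L.Sentence, φ ∈ T ∨ φ.not ∈ T

/-- `T` is `𝒯`-approximated: `T ∉ 𝒯` and every sentence of `T` lies in some member of `𝒯`. -/
def Approximated (𝒯 : Set L.Theory) (T : L.Theory) : Prop :=
  T ∉ 𝒯 ∧ ∀ φ ∈ T, ∃ T' ∈ 𝒯, φ ∈ T'

/-- The `φ`-neighbourhood `𝒯_φ` of a family of theories. -/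
def Nbhd (𝒯 : Set L.Theory) (φ : L.Sentence) : Set L.Theory :=
  {T' ∈ 𝒯 | φ ∈ T'}

/-- An accumulation point of `𝒯`: a complete theory each of whose sentences has an
infinite neighbourhood in `𝒯`. -/
def AccPoint (𝒯 : Set L.Theory) (T : L.Theory) : Prop :=
  CompleteTheory T ∧ ∀ φ ∈ T, (Nbhd 𝒯 φ).Infinite

/-- The `E`-closure of `𝒯`: `𝒯` together with all its accumulation points. -/
def ClE (𝒯 : Set L.Theory) : Set L.Theory :=
  𝒯 ∪ {T | AccPoint 𝒯 T}

/-- A sentence `ψ` is `𝒯`-complete if the neighbourhood `𝒯_ψ` is a singleton. -/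
def TComplete {L : FirstOrder.Language.{u, v}} (𝒯 : Set L.Theory) (ψ : L.Sentence) : Prop :=
  ∃ S : L.Theory, Nbhd 𝒯 ψ = {S}

/-- The (finite) disjunction of a list of sentences. -/
def disjList {L : FirstOrder.Language.{u, v}} (l : List L.Sentence) : L.Sentence :=
  l.foldr (· ⊔ ·) ⊥

def conjList (l : List L.Sentence) : L.Sentence :=
  l.foldr (· ⊓ ·) ⊤

lemma realize_disjList {M : Type (max u v)} [L.Structure M] (l : List L.Sentence) :
    M ⊨ disjList l ↔ ∃ ψ ∈ l, M ⊨ ψ := by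
  induction l with
  | nil => simp [disjList, Sentence.Realize, Formula.realize_bot]
  | cons a l ih =>
      simp only [disjList, List.foldr_cons] at *
      constructor
      · intro h
        rcases (Formula.realize_sup.1 h) with h | h
        · exact ⟨a, List.mem_cons_self, h⟩
        · obtain ⟨ψ, hψ, hr⟩ := ih.1 h
          exact ⟨ψ, List.mem_cons_of_mem _ hψ, hr⟩
      · rintro ⟨ψ, hψ, hr⟩
        rcases List.mem_cons.1 hψ with rfl | hψ
        · exact Formula.realize_sup.2 (Or.inl hr)
        · exact Formula.realize_sup.2 (Or.inr (ih.2 ⟨ψ, hψ, hr⟩))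

lemma realize_conjList {M : Type (max u v)} [L.Structure M] (l : List L.Sentence) :
    M ⊨ conjList l ↔ ∀ ψ ∈ l, M ⊨ ψ := by
  induction l with
  | nil => simp [conjList, Sentence.Realize, Formula.realize_top]
  | cons a l ih =>
      simp only [conjList, List.foldr_cons] at *
      constructor
      · intro h ψ hψ
        rcases List.mem_cons.1 hψ with rfl | hψ
        · exact (Formula.realize_inf.1 h).1
        · exact ih.1 (Formula.realize_inf.1 h).2 ψ hψ
      · intro h
        exact Formula.realize_inf.2 ⟨h a (List.mem_cons_self),
          ih.2 fun ψ hψ => h ψ (List.mem_cons_of_mem _ hψ)⟩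


lemma model_realize {T : L.Theory} (M : Theory.ModelType.{u, v, max u v} T)
    {φ : L.Sentence} (h : φ ∈ T) : (M : Type (max u v)) ⊨ φ :=
  T.realize_sentence_of_mem h

lemma model_not_realize {T : L.Theory} (M : Theory.ModelType.{u, v, max u v} T)
    {φ : L.Sentence} (h : φ.not ∈ T) : ¬ (M : Type (max u v)) ⊨ φ := by
  have := model_realize M h
  rw [Sentence.realize_not] at this
  exact this

lemma CompleteTheory.not_mem_not {T : L.Theory} (hT : CompleteTheory T) {φ : L.Sentence}
    (hφ : φ ∈ T) : φ.not ∉ T := by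
  intro h
  obtain ⟨M⟩ := hT.1
  exact model_not_realize M h (model_realize M hφ)

lemma CompleteTheory.mem_of_models {T : L.Theory} (hT : CompleteTheory T) {χ : L.Sentence}
    (h : ∀ M : Theory.ModelType.{u, v, max u v} T, (M : Type (max u v)) ⊨ χ) : χ ∈ T := by
  rcases hT.2 χ with h1 | h1
  · exact h1
  · exfalso
    obtain ⟨M⟩ := hT.1
    exact model_not_realize M h1 (h M)

lemma CompleteTheory.mem_disjList {T : L.Theory} (hT : CompleteTheory T) {ψ : L.Sentence}
    {l : List L.Sentence} (hψl : ψ ∈ l) (hψ : ψ ∈ T) : disjList l ∈ T := by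
  refine hT.mem_of_models fun M => ?_
  exact (realize_disjList l).2 ⟨ψ, hψl, model_realize M hψ⟩

lemma CompleteTheory.exists_mem_of_disjList {T : L.Theory} (hT : CompleteTheory T)
    {l : List L.Sentence} (h : disjList l ∈ T) : ∃ ψ ∈ l, ψ ∈ T := by
  by_contra hc
  push_neg at hc
  obtain ⟨M⟩ := hT.1
  obtain ⟨ψ, hψl, hr⟩ := (realize_disjList l).1 (model_realize M h)
  exact model_not_realize M ((hT.2 ψ).resolve_left (hc ψ hψl)) hr

lemma CompleteTheory.mem_conjList {T : L.Theory} (hT : CompleteTheory T)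
    {l : List L.Sentence} (h : ∀ ψ ∈ l, ψ ∈ T) : conjList l ∈ T := by
  refine hT.mem_of_models fun M => ?_
  exact (realize_conjList l).2 fun ψ hψ => model_realize M (h ψ hψ)

lemma CompleteTheory.mem_of_conjList {T : L.Theory} (hT : CompleteTheory T)
    {l : List L.Sentence} (h : conjList l ∈ T) {ψ : L.Sentence} (hψ : ψ ∈ l) : ψ ∈ T := by
  rcases hT.2 ψ with h1 | h1
  · exact h1
  exfalso
  obtain ⟨M⟩ := hT.1
  exact model_not_realize M h1 ((realize_conjList l).1 (model_realize M h) ψ hψ)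

lemma exists_sep {T T' : L.Theory} (hT : CompleteTheory T) (hT' : CompleteTheory T')
    (hne : T' ≠ T) : ∃ χ, χ ∈ T ∧ χ ∉ T' := by
  by_contra hc
  push_neg at hc
  refine hne ?_
  apply Set.Subset.antisymm
  · intro χ hχ
    rcases hT.2 χ with h1 | h1
    · exact h1
    · exact absurd (hc _ h1) (fun h => hT'.not_mem_not hχ h)
  · exact hc

lemma mem_Nbhd {𝒯 : Set L.Theory} {φ : L.Sentence} {T' : L.Theory} :
    T' ∈ Nbhd 𝒯 φ ↔ T' ∈ 𝒯 ∧ φ ∈ T' := Iff.rfl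

lemma Nbhd_mono {𝒮 𝒯 : Set L.Theory} (h : 𝒮 ⊆ 𝒯) (φ : L.Sentence) :
    Nbhd 𝒮 φ ⊆ Nbhd 𝒯 φ := fun _ hx => ⟨h hx.1, hx.2⟩

lemma mem_ClE {𝒯 : Set L.Theory} {T : L.Theory} :
    T ∈ ClE 𝒯 ↔ T ∈ 𝒯 ∨ AccPoint 𝒯 T := Iff.rfl

lemma exists_isolating {𝒯 : Set L.Theory} (h𝒯 : ∀ S ∈ 𝒯, CompleteTheory S)
    {T : L.Theory} (hT : T ∈ 𝒯) {φ : L.Sentence} (hφ : φ ∈ T)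
    (hfin : (Nbhd 𝒯 φ).Finite) : ∃ Φ ∈ T, Nbhd 𝒯 Φ = {T} := by
  classical
  have hTc := h𝒯 T hT
  have hc : ∀ S ∈ hfin.toFinset.erase T, ∃ χ, χ ∈ T ∧ χ ∉ S := by
    intro S hS
    rcases Finset.mem_erase.1 hS with ⟨hne, hSm⟩
    exact exists_sep hTc (h𝒯 S (hfin.mem_toFinset.1 hSm).1) hne
  choose! χ hχ1 hχ2 using hc
  set l : List L.Sentence := (hfin.toFinset.erase T).toList.map χ with hl
  have hmem : conjList (φ :: l) ∈ T := by
    refine hTc.mem_conjList ?_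
    intro ψ hψ
    rcases List.mem_cons.1 hψ with rfl | hψ
    · exact hφ
    · obtain ⟨S, hS, rfl⟩ := List.mem_map.1 hψ
      exact hχ1 S (Finset.mem_toList.1 hS)
  refine ⟨conjList (φ :: l), hmem, ?_⟩
  ext T'
  simp only [Set.mem_singleton_iff]
  constructor
  · rintro ⟨hT'𝒯, hT'Φ⟩
    have hT'c := h𝒯 T' hT'𝒯
    have hφT' : φ ∈ T' := hT'c.mem_of_conjList hT'Φ List.mem_cons_self
    by_contra hne
    have hT'e : T' ∈ hfin.toFinset.erase T :=
      Finset.mem_erase.2 ⟨hne, hfin.mem_toFinset.2 ⟨hT'𝒯, hφT'⟩⟩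
    have hmem' : χ T' ∈ l := List.mem_map.2 ⟨T', Finset.mem_toList.2 hT'e, rfl⟩
    exact hχ2 T' hT'e (hT'c.mem_of_conjList hT'Φ (List.mem_cons_of_mem _ hmem'))
  · rintro rfl
    exact ⟨hT, hmem⟩

/-- for a generating set `𝒯₀'` of an `E`-closed family `𝒯₀` the following are
equivalent: (1) `𝒯₀'` is the least generating set; (2) `𝒯₀'` is a minimal generating
set; (3) every member is isolated by a sentence in `𝒯₀'`; (4) every member is isolated by
a sentence in `𝒯₀`; (5) every member contains a finite disjunction of `𝒯₀'`-complete
sentences; (6) every member contains a finite disjunction of `𝒯₀`-complete sentences. -/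
theorem least_generating_set_tfae
    {L : FirstOrder.Language.{u, v}} [L.IsRelational]
    (𝒯₀ 𝒯₀' : Set L.Theory) (h𝒯₀ : ∀ S ∈ 𝒯₀, CompleteTheory S)
    (hclosed : ClE 𝒯₀ = 𝒯₀) (hsub : 𝒯₀' ⊆ 𝒯₀) (hgen : ClE 𝒯₀' = 𝒯₀) :
    List.TFAE
      [ ∀ 𝒮 : Set L.Theory, 𝒮 ⊆ 𝒯₀ → ClE 𝒮 = 𝒯₀ → 𝒯₀' ⊆ 𝒮,
        ∀ 𝒮 : Set L.Theory, 𝒮 ⊂ 𝒯₀' → ClE 𝒮 ≠ 𝒯₀,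
        ∀ T ∈ 𝒯₀', ∃ φ ∈ T, Nbhd 𝒯₀' φ = {T},
        ∀ T ∈ 𝒯₀', ∃ φ ∈ T, Nbhd 𝒯₀ φ = {T},
        ∀ T ∈ 𝒯₀', ∃ l : List L.Sentence, l ≠ [] ∧
          (∀ ψ ∈ l, TComplete 𝒯₀' ψ) ∧ disjList l ∈ T,
        ∀ T ∈ 𝒯₀', ∃ l : List L.Sentence, l ≠ [] ∧
          (∀ ψ ∈ l, TComplete 𝒯₀ ψ) ∧ disjList l ∈ T ] := by
  have hcomp' : ∀ S ∈ 𝒯₀', CompleteTheory S := fun S hS => h𝒯₀ S (hsub hS)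
  tfae_have 1 → 2
  · intro h1 𝒮 hss hcl
    exact hss.not_subset (h1 𝒮 (hss.subset.trans hsub) hcl)
  tfae_have 2 → 3
  · intro h2 T hT
    by_contra hc
    push_neg at hc
    have hinf : ∀ φ ∈ T, (Nbhd 𝒯₀' φ).Infinite := by
      intro φ hφ
      by_contra hfin
      rw [Set.not_infinite] at hfin
      obtain ⟨Φ, hΦT, hΦ⟩ := exists_isolating hcomp' hT hφ hfin
      exact hc Φ hΦT hΦ
    have hsubN : ∀ φ : L.Sentence, Nbhd 𝒯₀' φ \ {T} ⊆ Nbhd (𝒯₀' \ {T}) φ := by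
      rintro φ x ⟨⟨hx1, hx2⟩, hx3⟩
      exact ⟨⟨hx1, hx3⟩, hx2⟩
    refine h2 (𝒯₀' \ {T}) (Set.sdiff_singleton_ssubset.2 hT) ?_
    apply Set.Subset.antisymm
    · rintro S (hS | hS)
      · exact hsub hS.1
      · have : AccPoint 𝒯₀' S :=
          ⟨hS.1, fun φ hφ => (hS.2 φ hφ).mono (Nbhd_mono Set.diff_subset φ)⟩
        rw [← hgen]
        exact Or.inr this
    · intro S hS𝒯₀
      have hScl : S ∈ ClE 𝒯₀' := by rw [hgen]; exact hS𝒯₀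
      rcases hScl with hS | hS
      · by_cases hST : S = T
        · subst hST
          exact Or.inr ⟨hcomp' S hS, fun φ hφ =>
            (((hinf φ hφ).diff (Set.finite_singleton S)).mono (hsubN φ))⟩
        · exact Or.inl ⟨hS, hST⟩
      · exact Or.inr ⟨hS.1, fun φ hφ =>
          (((hS.2 φ hφ).diff (Set.finite_singleton T)).mono (hsubN φ))⟩
  tfae_have 3 → 4
  · intro h3 T hT
    obtain ⟨φ, hφ, hN⟩ := h3 T hT
    refine ⟨φ, hφ, Set.Subset.antisymm ?_
      (Set.singleton_subset_iff.2 ⟨hsub hT, hφ⟩)⟩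
    rintro T'' ⟨hT''𝒯₀, hφT''⟩
    have hT''cl : T'' ∈ ClE 𝒯₀' := by rw [hgen]; exact hT''𝒯₀
    rcases hT''cl with h | h
    · have : T'' ∈ Nbhd 𝒯₀' φ := ⟨h, hφT''⟩
      rwa [hN] at this
    · exfalso
      have := h.2 φ hφT''
      rw [hN] at this
      exact this (Set.finite_singleton T)
  tfae_have 4 → 1
  · intro h4 𝒮 h𝒮sub h𝒮cl T hT
    obtain ⟨φ, hφ, hN⟩ := h4 T hT
    have hTcl : T ∈ ClE 𝒮 := by rw [h𝒮cl]; exact hsub hT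
    rcases hTcl with h | h
    · exact h
    · exfalso
      have hfin : (Nbhd 𝒮 φ).Finite := by
        refine (Set.finite_singleton T).subset ?_
        rw [← hN]
        exact Nbhd_mono h𝒮sub φ
      exact h.2 φ hφ hfin
  tfae_have 4 → 6
  · intro h4 T hT
    obtain ⟨φ, hφ, hN⟩ := h4 T hT
    exact ⟨[φ], List.cons_ne_nil _ _,
      fun ψ hψ => by rw [List.mem_singleton.1 hψ]; exact ⟨T, hN⟩,
      (hcomp' T hT).mem_disjList List.mem_cons_self hφ⟩
  tfae_have 6 → 4
  · intro h6 T hT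
    obtain ⟨l, _, hlc, hld⟩ := h6 T hT
    obtain ⟨ψ, hψl, hψT⟩ := (hcomp' T hT).exists_mem_of_disjList hld
    obtain ⟨S, hS⟩ := hlc ψ hψl
    have hTS : T ∈ ({S} : Set L.Theory) := by rw [← hS]; exact ⟨hsub hT, hψT⟩
    rw [Set.mem_singleton_iff] at hTS
    subst hTS
    exact ⟨ψ, hψT, hS⟩
  tfae_have 3 → 5
  · intro h3 T hT
    obtain ⟨φ, hφ, hN⟩ := h3 T hT
    exact ⟨[φ], List.cons_ne_nil _ _,
      fun ψ hψ => by rw [List.mem_singleton.1 hψ]; exact ⟨T, hN⟩,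
      (hcomp' T hT).mem_disjList List.mem_cons_self hφ⟩
  tfae_have 5 → 3
  · intro h5 T hT
    obtain ⟨l, _, hlc, hld⟩ := h5 T hT
    obtain ⟨ψ, hψl, hψT⟩ := (hcomp' T hT).exists_mem_of_disjList hld
    obtain ⟨S, hS⟩ := hlc ψ hψl
    have hTS : T ∈ ({S} : Set L.Theory) := by rw [← hS]; exact ⟨hT, hψT⟩
    rw [Set.mem_singleton_iff] at hTS
    subst hTS
    exact ⟨ψ, hψT, hS⟩
  tfae_finish

end Approx
end

section
/- Let L be a language all of whose relation symbols are unary (and with no function or constant symbols), and let T be a complete L-theory whose models are infinite. Then T is countably approximable: there exists a countable family 𝒯 of complete L-theories with T ∉ 𝒯 such that every sentence φ ∈ T belongs to some member of 𝒯. -/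
set_option linter.unusedVariables false
set_option linter.unusedSectionVars false
set_option maxHeartbeats 1000000

open FirstOrder Language Set

universe u v

namespace Approx

variable {L : FirstOrder.Language.{u, v}}

variable {L : FirstOrder.Language.{u, v}}

/-- The class of elements matching pattern `f` on the relations in `s`. -/
def cls (s : Set (L.Relations 1)) (f : L.Relations 1 → Prop) (X : Type*) [L.Structure X] :
    Set X :=
  {x | ∀ r ∈ s, (Structure.RelMap r ![x] ↔ f r)}

lemma mem_cls {s : Set (L.Relations 1)} {f : L.Relations 1 → Prop} {X : Type*} [L.Structure X]
    {x : X} : x ∈ cls s f X ↔ ∀ r ∈ s, (Structure.RelMap r ![x] ↔ f r) := Iff.rfl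

/-- Quantifier depth. -/
def qd : ∀ {n}, L.BoundedFormula Empty n → ℕ
  | _, .falsum => 0
  | _, .equal _ _ => 0
  | _, .rel _ _ => 0
  | _, .imp f g => max (qd f) (qd g)
  | _, .all f => qd f + 1

/-- Relation symbols occurring in a formula. -/
def relsIn : ∀ {n}, L.BoundedFormula Empty n → Set (L.Relations 1)
  | _, .falsum => ∅
  | _, .equal _ _ => ∅
  | _, .rel R _ => {r | HEq r R}
  | _, .imp f g => relsIn f ∪ relsIn g
  | _, .all f => relsIn f

lemma relsIn_finite : ∀ {n} (φ : L.BoundedFormula Empty n), (relsIn φ).Finite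
  | _, .falsum => finite_empty
  | _, .equal _ _ => finite_empty
  | _, .rel R _ => Set.Subsingleton.finite (fun r₁ h₁ r₂ h₂ => eq_of_heq (h₁.trans h₂.symm))
  | _, .imp f g => (relsIn_finite f).union (relsIn_finite g)
  | _, .all f => relsIn_finite f


section Extend


variable {X Y : Type*} [L.Structure X] [L.Structure Y]

lemma exists_extend (S : Set (L.Relations 1)) (K : ℕ)
    (hcount : ∀ g : L.Relations 1 → Prop,
      min (K : ℕ∞) (cls S g X).encard = min (K : ℕ∞) (cls S g Y).encard)
    {k : ℕ} (hk : k + 1 ≤ K) (xs : Fin k → X) (ys : Fin k → Y)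
    (hinj : ∀ i j, xs i = xs j ↔ ys i = ys j)
    (hcol : ∀ i, ∀ r ∈ S, (Structure.RelMap r ![xs i] ↔ Structure.RelMap r ![ys i]))
    (b : Y) :
    ∃ a : X, (∀ i, (a = xs i ↔ b = ys i)) ∧
      (∀ r ∈ S, (Structure.RelMap r ![a] ↔ Structure.RelMap r ![b])) := by
  classical
  by_cases hb : ∃ i, b = ys i
  · obtain ⟨i, rfl⟩ := hb
    refine ⟨xs i, fun j => ?_, fun r hr => (hcol i r hr)⟩
    constructor
    · intro h; exact ((hinj j i).1 h.symm).symm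
    · intro h; exact ((hinj j i).2 h.symm).symm
  · push_neg at hb
    set g : L.Relations 1 → Prop := fun r => Structure.RelMap r ![b] with hg
    have hbY : b ∈ cls S g Y := fun r _ => Iff.rfl
    have hmem : ∀ i, xs i ∈ cls S g X ↔ ys i ∈ cls S g Y := by
      intro i
      constructor
      · intro h r hr; exact (hcol i r hr).symm.trans (h r hr)
      · intro h r hr; exact (hcol i r hr).trans (h r hr)
    -- the bijection between matched parts
    set σ : X → Y := fun x => if h : ∃ i, xs i = x then ys h.choose else b with hσ
    have hσx : ∀ i, σ (xs i) = ys i := by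
      intro i
      have h : ∃ j, xs j = xs i := ⟨i, rfl⟩
      simp only [hσ, dif_pos h]
      exact (hinj h.choose i).1 h.choose_spec
    have himg : σ '' (cls S g X ∩ range xs) = cls S g Y ∩ range ys := by
      ext y
      constructor
      · rintro ⟨x, ⟨hx, ⟨i, rfl⟩⟩, rfl⟩
        rw [hσx i]
        exact ⟨(hmem i).1 hx, ⟨i, rfl⟩⟩
      · rintro ⟨hy, ⟨i, rfl⟩⟩
        exact ⟨xs i, ⟨(hmem i).2 hy, ⟨i, rfl⟩⟩, hσx i⟩
    have hinjOn : InjOn σ (cls S g X ∩ range xs) := by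
      rintro x₁ ⟨_, ⟨i, rfl⟩⟩ x₂ ⟨_, ⟨j, rfl⟩⟩ h
      rw [hσx i, hσx j] at h
      exact (hinj i j).2 h
    have hcard : (cls S g X ∩ range xs).encard = (cls S g Y ∩ range ys).encard := by
      rw [← himg, hinjOn.encard_image]
    set t := (cls S g Y ∩ range ys).encard with ht
    have htk : t ≤ (k : ℕ∞) := by
      calc t ≤ (range ys).encard := encard_le_encard inter_subset_right
        _ = (ys '' univ).encard := by rw [image_univ]
        _ ≤ (univ : Set (Fin k)).encard := encard_image_le _ _
        _ = (k : ℕ∞) := by rw [encard_univ]; simp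
    have hbnot : b ∉ cls S g Y ∩ range ys := fun h => by
      obtain ⟨i, rfl⟩ := h.2; exact hb i rfl
    have hYge : t + 1 ≤ (cls S g Y).encard := by
      have : insert b (cls S g Y ∩ range ys) ⊆ cls S g Y :=
        insert_subset hbY inter_subset_left
      calc t + 1 = (insert b (cls S g Y ∩ range ys)).encard := by
            rw [encard_insert_of_notMem hbnot]
        _ ≤ _ := encard_le_encard this
    have hXge : t + 1 ≤ (cls S g X).encard := by
      have h1 : t + 1 ≤ (K : ℕ∞) := by
        calc t + 1 ≤ (k : ℕ∞) + 1 := by exact add_le_add_left htk 1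
          _ = ((k+1 : ℕ) : ℕ∞) := by push_cast; ring
          _ ≤ (K : ℕ∞) := by exact_mod_cast Nat.cast_le.2 hk
      have h2 : t + 1 ≤ min (K : ℕ∞) (cls S g Y).encard := le_min h1 hYge
      rw [← hcount g] at h2
      exact h2.trans (min_le_right _ _)
    have : ∃ a ∈ cls S g X, a ∉ range xs := by
      by_contra h
      push_neg at h
      have hsub : cls S g X ⊆ cls S g X ∩ range xs := fun a ha => ⟨ha, h a ha⟩
      have := (encard_le_encard hsub).trans_eq hcard
      have hne : t ≠ ⊤ := (htk.trans_lt (by simp)).ne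
      have hlt : t < t + 1 := (ENat.lt_add_one_iff hne).2 le_rfl
      exact absurd (hXge.trans this) (by exact not_le.2 hlt)
    obtain ⟨a, haX, hanot⟩ := this
    refine ⟨a, fun i => ?_, fun r hr => (haX r hr).trans (Iff.rfl)⟩
    constructor
    · intro h; exact absurd (⟨i, h.symm⟩ : a ∈ range xs) hanot
    · intro h; exact absurd h (hb i)

end Extend

section Transfer


variable [L.IsRelational] {X Y : Type*} [L.Structure X] [L.Structure Y]

lemma term_eq_var {k : ℕ} (t : L.Term (Empty ⊕ Fin k)) : ∃ i, t = Term.var (Sum.inr i) := by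
  cases t with
  | var v =>
    cases v with
    | inl e => exact e.elim
    | inr i => exact ⟨i, rfl⟩
  | func f ts => exact isEmptyElim f


lemma transfer (hunary : ∀ n, n ≠ 1 → IsEmpty (L.Relations n))
    (S : Set (L.Relations 1)) (K : ℕ)
    (hcX : ∀ g : L.Relations 1 → Prop,
      min (K : ℕ∞) (cls S g X).encard = min (K : ℕ∞) (cls S g Y).encard)
    {k : ℕ} (φ : L.BoundedFormula Empty k) :
    relsIn φ ⊆ S → qd φ + k ≤ K →
    ∀ (xs : Fin k → X) (ys : Fin k → Y),
      (∀ i j, xs i = xs j ↔ ys i = ys j) →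
      (∀ i, ∀ r ∈ S, (Structure.RelMap r ![xs i] ↔ Structure.RelMap r ![ys i])) →
      (φ.Realize Empty.elim xs ↔ φ.Realize Empty.elim ys) := by
  induction φ with
  | falsum =>
    intro _ _ xs ys _ _
    simp [BoundedFormula.Realize]
  | equal t₁ t₂ =>
    intro _ _ xs ys hinj _
    obtain ⟨i, rfl⟩ := term_eq_var t₁
    obtain ⟨j, rfl⟩ := term_eq_var t₂
    simpa [BoundedFormula.Realize, Term.realize] using hinj i j
  | @rel k l R ts =>
    intro hsub hqd xs ys hinj hcol
    match l, R, ts with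
    | 0, R, ts => exact (hunary 0 (by omega)).elim R
    | (n+2), R, ts => exact (hunary (n+2) (by omega)).elim R
    | 1, R, ts =>
      have hR : R ∈ S := hsub (HEq.refl R)
      obtain ⟨i, hti⟩ := term_eq_var (ts 0)
      have h1 : (fun j => Term.realize (Sum.elim Empty.elim xs) (ts j)) = ![xs i] := by
        funext j
        have hj : j = 0 := Subsingleton.elim _ _
        subst hj
        rw [hti]
        rfl
      have h2 : (fun j => Term.realize (Sum.elim Empty.elim ys) (ts j)) = ![ys i] := by
        funext j
        have hj : j = 0 := Subsingleton.elim _ _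
        subst hj
        rw [hti]
        rfl
      show Structure.RelMap R (fun j => Term.realize (Sum.elim Empty.elim xs) (ts j)) ↔
           Structure.RelMap R (fun j => Term.realize (Sum.elim Empty.elim ys) (ts j))
      rw [h1, h2]
      exact hcol i R hR
  | @imp k f g ihf ihg =>
    intro hsub hqd xs ys hinj hcol
    have hm : qd (f.imp g) = max (qd f) (qd g) := rfl
    rw [hm] at hqd
    have h1 := ihf (fun r hr => hsub (Or.inl hr)) (by omega) xs ys hinj hcol
    have h2 := ihg (fun r hr => hsub (Or.inr hr)) (by omega) xs ys hinj hcol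
    simp only [BoundedFormula.realize_imp, h1, h2]
  | @all k f ih =>
    intro hsub hqd xs ys hinj hcol
    have hm : qd f.all = qd f + 1 := rfl
    rw [hm] at hqd
    have hqd' : qd f + (k + 1) ≤ K := by omega
    have hk1 : k + 1 ≤ K := by omega
    have snoc_match : ∀ (a : X) (b : Y), (∀ i, (a = xs i ↔ b = ys i)) →
        (∀ r ∈ S, (Structure.RelMap r ![a] ↔ Structure.RelMap r ![b])) →
        ((∀ i j : Fin (k+1), (Fin.snoc xs a : Fin (k+1) → X) i = (Fin.snoc xs a : Fin (k+1) → X) j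
            ↔ (Fin.snoc ys b : Fin (k+1) → Y) i = (Fin.snoc ys b : Fin (k+1) → Y) j) ∧
         (∀ i : Fin (k+1), ∀ r ∈ S,
           (Structure.RelMap r ![(Fin.snoc xs a : Fin (k+1) → X) i]
             ↔ Structure.RelMap r ![(Fin.snoc ys b : Fin (k+1) → Y) i]))) := by
      intro a b hext1 hext2
      constructor
      · intro i j
        rcases Fin.eq_castSucc_or_eq_last i with ⟨i', rfl⟩ | rfl <;>
          rcases Fin.eq_castSucc_or_eq_last j with ⟨j', rfl⟩ | rfl <;>
          simp only [Fin.snoc_castSucc, Fin.snoc_last]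
        · exact hinj i' j'
        · rw [eq_comm, eq_comm (a := ys i')]
          exact hext1 i'
        · exact hext1 j'
      · intro i r hr
        rcases Fin.eq_castSucc_or_eq_last i with ⟨i', rfl⟩ | rfl <;>
          simp only [Fin.snoc_castSucc, Fin.snoc_last]
        · exact hcol i' r hr
        · exact hext2 r hr
    simp only [BoundedFormula.realize_all]
    constructor
    · intro h b
      obtain ⟨a, hext1, hext2⟩ := exists_extend S K hcX hk1 xs ys hinj hcol b
      obtain ⟨hinj', hcol'⟩ := snoc_match a b hext1 hext2
      exact (ih hsub hqd' _ _ hinj' hcol').1 (h a)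
    · intro h a
      obtain ⟨b, hext1, hext2⟩ := exists_extend S K (fun g => (hcX g).symm) hk1 ys xs
        (fun i j => (hinj i j).symm) (fun i r hr => (hcol i r hr).symm) a
      obtain ⟨hinj', hcol'⟩ := snoc_match a b (fun i => (hext1 i).symm)
        (fun r hr => (hext2 r hr).symm)
      exact (ih hsub hqd' _ _ hinj' hcol').2 (h b)

end Transfer

section Sentences


open Classical in
/-- literal: `r` holds (or not) of variable `i` -/
noncomputable def litF {m : ℕ} (r : L.Relations 1) (b : Prop) (i : Fin m) :
    L.BoundedFormula Empty m :=
  if b then Relations.boundedFormula₁ r (Term.var (Sum.inr i))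
  else (Relations.boundedFormula₁ r (Term.var (Sum.inr i))).not

lemma realize_litF {X : Type*} [L.Structure X] {m : ℕ} (r : L.Relations 1) (b : Prop) (i : Fin m)
    (v : Empty → X) (xs : Fin m → X) :
    (litF r b i).Realize v xs ↔ (Structure.RelMap r ![xs i] ↔ b) := by
  classical
  by_cases h : b
  · rw [litF, if_pos h]
    simp [BoundedFormula.realize_rel₁, Term.realize, h]
  · rw [litF, if_neg h]
    simp [BoundedFormula.realize_not, BoundedFormula.realize_rel₁, Term.realize, h]

/-- conjunction of a list of formulas -/
def conjL {m : ℕ} : List (L.BoundedFormula Empty m) → L.BoundedFormula Empty m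
  | [] => ⊤
  | φ :: l => φ ⊓ conjL l

lemma realize_conjL {X : Type*} [L.Structure X] {m : ℕ} (l : List (L.BoundedFormula Empty m))
    (v : Empty → X) (xs : Fin m → X) :
    (conjL l).Realize v xs ↔ ∀ φ ∈ l, φ.Realize v xs := by
  induction l with
  | nil => simp [conjL]
  | cons φ l ih => simp [conjL, ih]

open Classical in
/-- distinctness formulas -/
noncomputable def distinctL (m : ℕ) : List (L.BoundedFormula Empty m) :=
  ((List.finRange m).product (List.finRange m)).map
    (fun p => if p.1 = p.2 then ⊤
      else (Term.bdEqual (Term.var (Sum.inr p.1)) (Term.var (Sum.inr p.2))).not)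

noncomputable def patsL (m : ℕ) (s : Finset (L.Relations 1)) (f : L.Relations 1 → Prop) :
    List (L.BoundedFormula Empty m) :=
  (List.finRange m).map (fun i => conjL (s.toList.map (fun r => litF r (f r) i)))

/-- "there are at least `m` elements satisfying the pattern `(s, f)`" -/
noncomputable def exGe (m : ℕ) (s : Finset (L.Relations 1)) (f : L.Relations 1 → Prop) :
    L.Sentence :=
  (conjL (distinctL m ++ patsL m s f)).exs

lemma realize_exGe {X : Type*} [L.Structure X] (m : ℕ) (s : Finset (L.Relations 1))
    (f : L.Relations 1 → Prop) :
    X ⊨ exGe m s f ↔ (m : ℕ∞) ≤ (cls ↑s f X).encard := by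
  classical
  have body : ∀ (v : Empty → X) (xs : Fin m → X),
      ((conjL (distinctL m ++ patsL m s f)).Realize v xs ↔
       (Function.Injective xs ∧ ∀ i, xs i ∈ cls (↑s) f X)) := by
    intro v xs
    rw [realize_conjL]
    constructor
    · intro h
      constructor
      · intro i j hij
        by_contra hne
        have hmem : ((Term.bdEqual (Term.var (Sum.inr i)) (Term.var (Sum.inr j))).not :
            L.BoundedFormula Empty m) ∈ distinctL m := by
          simp only [distinctL, List.mem_map]
          refine ⟨(i, j), by simp [List.pair_mem_product], ?_⟩
          rw [if_neg hne]
        have := h _ (List.mem_append_left _ hmem)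
        rw [BoundedFormula.realize_not, BoundedFormula.realize_bdEqual] at this
        exact this hij
      · intro i r hr
        have hmem : (conjL (s.toList.map (fun r => litF r (f r) i))) ∈ patsL m s f := by
          simp only [patsL, List.mem_map]
          exact ⟨i, List.mem_finRange i, rfl⟩
        have := h _ (List.mem_append_right _ hmem)
        rw [realize_conjL] at this
        have := this _ (List.mem_map.2 ⟨r, Finset.mem_toList.2 (Finset.mem_coe.1 hr), rfl⟩)
        rwa [realize_litF] at this
    · rintro ⟨hinj, hcls⟩ φ hφ
      rcases List.mem_append.1 hφ with hφ | hφ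
      · simp only [distinctL, List.mem_map] at hφ
        obtain ⟨⟨i, j⟩, _, rfl⟩ := hφ
        by_cases hij : i = j
        · rw [if_pos hij]; exact BoundedFormula.realize_top.2 trivial
        · rw [if_neg hij, BoundedFormula.realize_not, BoundedFormula.realize_bdEqual]
          intro h
          exact hij (hinj h)
      · simp only [patsL, List.mem_map] at hφ
        obtain ⟨i, _, rfl⟩ := hφ
        rw [realize_conjL]
        intro ψ hψ
        rw [List.mem_map] at hψ
        obtain ⟨r, hr, rfl⟩ := hψ
        rw [realize_litF]
        exact hcls i r (by simpa using hr)
  rw [exGe, Sentence.Realize, BoundedFormula.realize_exs]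
  constructor
  · rintro ⟨xs, hb⟩
    obtain ⟨hinj, hcls⟩ := (body _ xs).1 hb
    have hr : (range xs).encard = (m : ℕ∞) := by
      rw [← image_univ, Set.InjOn.encard_image hinj.injOn]
      simp [encard_univ]
    calc (m : ℕ∞) = (range xs).encard := hr.symm
      _ ≤ _ := encard_le_encard (range_subset_iff.2 hcls)
  · intro h
    obtain ⟨t, hts, htm⟩ := Set.exists_subset_encard_eq h
    have htfin : t.Finite := finite_of_encard_eq_coe htm
    have hcard : htfin.toFinset.card = m := by
      have := htfin.encard_eq_coe_toFinset_card
      rw [htm] at this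
      exact_mod_cast this.symm
    set e := htfin.toFinset.equivFinOfCardEq hcard with he
    refine ⟨fun i => (e.symm i : X), (body _ _).2 ⟨?_, ?_⟩⟩
    · intro i j hij
      have : e.symm i = e.symm j := Subtype.ext hij
      simpa using congrArg e this
    · intro i
      exact hts (htfin.mem_toFinset.1 (e.symm i).2)

end Sentences

section Color


variable [L.IsRelational]

/-- A structure on `X` in a purely unary relational language, given by a coloring. -/
def colorStruct (hunary : ∀ n, n ≠ 1 → IsEmpty (L.Relations n))
    {X : Type*} (γ : X → (L.Relations 1 → Prop)) : L.Structure X where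
  funMap {n} f _ := isEmptyElim f
  RelMap {n} :=
    match n with
    | 0 => fun r _ => (hunary 0 (by omega)).elim r
    | 1 => fun r v => γ (v 0) r
    | (n + 2) => fun r _ => (hunary (n + 2) (by omega)).elim r

lemma cls_colorStruct (hunary : ∀ n, n ≠ 1 → IsEmpty (L.Relations n))
    {X : Type*} (γ : X → (L.Relations 1 → Prop)) (s : Set (L.Relations 1))
    (f : L.Relations 1 → Prop) :
    @cls L s f X (colorStruct hunary γ) = {x | ∀ r ∈ s, (γ x r ↔ f r)} := rfl

variable {M : Type (max u v)} [L.Structure M]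

/-- The color of an element. -/
def colorOf (x : M) : L.Relations 1 → Prop := fun r => Structure.RelMap r ![x]

lemma mem_cls_iff_colorOf {s : Set (L.Relations 1)} {f : L.Relations 1 → Prop} {x : M} :
    x ∈ cls s f M ↔ ∀ r ∈ s, (colorOf x r ↔ f r) := Iff.rfl

variable (A : Set M) {β : Type v} (K : β → ℕ) (χ : β → L.Relations 1 → Prop)

/-- Carrier of a modified structure: a part of `M` plus colored blobs. -/
abbrev MemberCarrier : Type (max u v) := ↥A ⊕ (Σ _b : β, ULift.{max u v} (Fin (K _b)))

noncomputable def memberStruct (hunary : ∀ n, n ≠ 1 → IsEmpty (L.Relations n)) :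
    L.Structure (MemberCarrier A K) :=
  colorStruct hunary (Sum.elim (fun a => colorOf (a : M)) (fun p => χ p.1))

variable (hunary : ∀ n, n ≠ 1 → IsEmpty (L.Relations n))

lemma cls_member (s : Set (L.Relations 1)) (g : L.Relations 1 → Prop) :
    @cls L s g (MemberCarrier A K) (memberStruct A K χ hunary) =
      Sum.inl '' {a : ↥A | (a : M) ∈ cls s g M} ∪
      Sum.inr '' {p : Σ _b : β, ULift.{max u v} (Fin (K _b)) | ∀ r ∈ s, (χ p.1 r ↔ g r)} := by
  ext x
  rw [show @cls L s g (MemberCarrier A K) (memberStruct A K χ hunary) =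
    {x | ∀ r ∈ s, ((Sum.elim (fun a : ↥A => colorOf (a : M)) (fun p => χ p.1) x) r ↔ g r)} from
      cls_colorStruct hunary _ s g]
  cases x with
  | inl a =>
    simp only [mem_setOf_eq, Sum.elim_inl, mem_union, mem_image]
    constructor
    · intro h
      exact Or.inl ⟨a, h, rfl⟩
    · rintro (⟨a', h, heq⟩ | ⟨p, _, heq⟩)
      · cases Sum.inl_injective heq; exact h
      · exact absurd heq (by simp)
  | inr p =>
    simp only [mem_setOf_eq, Sum.elim_inr, mem_union, mem_image]
    constructor
    · intro h
      exact Or.inr ⟨p, h, rfl⟩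
    · rintro (⟨a', _, heq⟩ | ⟨p', h, heq⟩)
      · exact absurd heq (by simp)
      · cases Sum.inr_injective heq; exact h

lemma encard_cls_member (s : Set (L.Relations 1)) (g : L.Relations 1 → Prop) :
    (@cls L s g (MemberCarrier A K) (memberStruct A K χ hunary)).encard =
      (A ∩ cls s g M).encard +
      ({p : Σ _b : β, ULift.{max u v} (Fin (K _b)) | ∀ r ∈ s, (χ p.1 r ↔ g r)}).encard := by
  rw [cls_member A K χ hunary s g, encard_union_eq, Sum.inl_injective.encard_image,
    Sum.inr_injective.encard_image]
  · congr 1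
    have : A ∩ cls s g M = Subtype.val '' {a : ↥A | (a : M) ∈ cls s g M} := by
      ext y
      simp only [mem_inter_iff, mem_image, mem_setOf_eq, Subtype.exists, exists_and_right,
        exists_eq_right]
      tauto
    rw [this, Subtype.val_injective.encard_image]
  · exact disjoint_left.2 (by rintro _ ⟨a, _, rfl⟩ ⟨p, _, h⟩; simp at h)

end Color

section Helpers


variable {M : Type (max u v)} [L.Structure M]

/-- Ultrafilter limit color of an infinite set. -/
lemma exists_limitColor {C : Set M} (hC : C.Infinite) :
    ∃ c : L.Relations 1 → Prop, ∀ s : Set (L.Relations 1), s.Finite →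
      (C ∩ cls s c M).Infinite := by
  classical
  haveI : Infinite ↥C := hC.to_subtype
  haveI : (Filter.cofinite : Filter ↥C).NeBot := Filter.cofinite_neBot
  set U : Ultrafilter ↥C := Ultrafilter.of Filter.cofinite with hU
  have hUle : (U : Filter ↥C) ≤ Filter.cofinite := Ultrafilter.of_le _
  set c : L.Relations 1 → Prop := fun r => {y : ↥C | Structure.RelMap r ![(y : M)]} ∈ U with hc
  refine ⟨c, fun s hs => ?_⟩
  set E : Set ↥C := ⋂ r ∈ s, {y : ↥C | Structure.RelMap r ![(y : M)] ↔ c r} with hE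
  have hEU : E ∈ U := by
    rw [hE]
    refine (Filter.biInter_mem hs).2 fun r _ => ?_
    by_cases h : c r
    · have : {y : ↥C | Structure.RelMap r ![(y : M)] ↔ c r} =
        {y : ↥C | Structure.RelMap r ![(y : M)]} := by
        ext y; simp [h]
      rw [this]; exact h
    · have : {y : ↥C | Structure.RelMap r ![(y : M)] ↔ c r} =
        {y : ↥C | Structure.RelMap r ![(y : M)]}ᶜ := by
        ext y; simp [h]
      rw [this]
      exact (Ultrafilter.compl_mem_iff_notMem).2 h
  have hEinf : E.Infinite := by
    by_contra hfin
    rw [not_infinite] at hfin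
    have : Eᶜ ∈ U := hUle hfin.compl_mem_cofinite
    have := Filter.inter_mem hEU this
    simp at this
  have himg : Subtype.val '' E ⊆ C ∩ cls s c M := by
    rintro _ ⟨y, hy, rfl⟩
    refine ⟨y.2, fun r hr => ?_⟩
    have := mem_iInter₂.1 hy r hr
    exact this
  exact ((hEinf.image Subtype.val_injective.injOn).mono himg)

/-- From the limit property: on any finite set where all of `C` has a fixed pattern,
the limit color agrees with that pattern. -/
lemma limitColor_agrees {C : Set M} {c f : L.Relations 1 → Prop} {s : Set (L.Relations 1)}
    (hlim : ∀ t : Set (L.Relations 1), t.Finite → (C ∩ cls t c M).Infinite)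
    (hCf : C ⊆ cls s f M) : ∀ r ∈ s, (c r ↔ f r) := by
  intro r hr
  obtain ⟨x, ⟨hxC, hxc⟩⟩ := (hlim {r} (finite_singleton r)).nonempty
  have h1 : Structure.RelMap r ![x] ↔ c r := hxc r rfl
  have h2 : Structure.RelMap r ![x] ↔ f r := hCf hxC r hr
  rw [← h1, h2]

/-- If there is no infinite pairwise disjoint family in `𝔖`, a finite transversal
touching every member exists. -/
lemma exists_toucher (𝔖 : Set (Finset (L.Relations 1)))
    (h : ¬ ∃ q : ℕ → Finset (L.Relations 1), (∀ j, q j ∈ 𝔖) ∧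
      (∀ i j, i ≠ j → Disjoint (q i) (q j))) :
    ∃ W : Finset (L.Relations 1), ∀ s ∈ 𝔖, ¬ Disjoint W s := by
  classical
  by_contra hc
  push_neg at hc
  -- hc : ∀ W, ∃ s ∈ 𝔖, Disjoint W s
  choose pick hmem hdisj using hc
  let acc : ℕ → Finset (L.Relations 1) := fun n => Nat.rec ∅ (fun _ a => a ∪ pick a) n
  have hacc_succ : ∀ n, acc (n + 1) = acc n ∪ pick (acc n) := fun n => rfl
  have hmono : ∀ {m n}, m ≤ n → acc m ⊆ acc n := by
    intro m n hmn
    induction n with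
    | zero => cases Nat.le_zero.1 hmn; exact subset_rfl
    | succ n ih =>
      rcases Nat.lt_or_ge m (n+1) with h | h
      · exact (ih (Nat.lt_succ_iff.1 h)).trans (by rw [hacc_succ]; exact Finset.subset_union_left)
      · cases Nat.le_antisymm hmn h; exact subset_rfl
  refine h ⟨fun n => pick (acc n), fun n => hmem _, ?_⟩
  have key : ∀ i j, i < j → Disjoint (pick (acc i)) (pick (acc j)) := by
    intro i j hij
    have h1 : pick (acc i) ⊆ acc (i + 1) := by rw [hacc_succ]; exact Finset.subset_union_right
    have h2 : acc (i+1) ⊆ acc j := hmono hij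
    exact (Finset.disjoint_of_subset_left (h1.trans h2) (hdisj (acc j)))
  intro i j hij
  rcases Nat.lt_or_ge i j with h | h
  · exact key i j h
  · exact (key j i (lt_of_le_of_ne h (Ne.symm hij))).symm

/-- Pigeonhole: some pattern over a finite set has infinite class within an infinite set. -/
lemma exists_bigPattern (V : Finset (L.Relations 1)) {C : Set M} (hC : C.Infinite) :
    ∃ g : L.Relations 1 → Prop, (C ∩ cls ↑V g M).Infinite := by
  classical
  by_contra hc
  push_neg at hc
  have hcover : C ⊆ ⋃ b : (↥(V : Finset (L.Relations 1)) → Prop),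
      (C ∩ cls ↑V (fun r => ∃ h : r ∈ V, b ⟨r, h⟩) M) := by
    intro x hx
    refine mem_iUnion.2 ⟨fun r => Structure.RelMap r.1 ![x], hx, fun r hr => ?_⟩
    constructor
    · intro h; exact ⟨hr, h⟩
    · rintro ⟨h₁, h₂⟩; exact h₂
  have : C.Finite := Finite.subset (finite_iUnion (fun b => hc _)) hcover
  exact hC this
end Helpers

section Glue

variable [L.IsRelational] {M : Type (max u v)} [L.Structure M]

lemma sentence_realize_iff_realize {Z : Type*} [L.Structure Z] (φ : L.Sentence) :
    (Z ⊨ φ) ↔ BoundedFormula.Realize φ (Empty.elim : Empty → Z) (finZeroElim : Fin 0 → Z) := by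
  rw [Sentence.Realize, Formula.Realize]
  have e1 : (default : Empty → Z) = Empty.elim := Subsingleton.elim _ _
  have e2 : (default : Fin 0 → Z) = finZeroElim := Subsingleton.elim _ _
  rw [e1, e2]

lemma glue (hunary : ∀ n, n ≠ 1 → IsEmpty (L.Relations n)) [Nonempty M]
    {I : Type} [Countable I]
    (X : I → Type (max u v)) (inst : ∀ i, L.Structure (X i)) (hne : ∀ i, Nonempty (X i))
    (hdiff : ∀ i, ∃ ψ : L.Sentence, (@Sentence.Realize L (X i) (inst i) ψ) ∧ ¬ (M ⊨ ψ))
    (hcov : ∀ s : Set (L.Relations 1), s.Finite → ∀ K : ℕ, ∃ i, ∀ g : L.Relations 1 → Prop,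
        min (K : ℕ∞) (cls s g M).encard = min (K : ℕ∞) (@cls L s g (X i) (inst i)).encard) :
    ∃ 𝒯 : Set L.Theory, 𝒯.Countable ∧ (∀ S ∈ 𝒯, CompleteTheory S) ∧
      Approximated 𝒯 (L.completeTheory M) := by
  classical
  refine ⟨Set.range (fun i => @Language.completeTheory L (X i) (inst i)),
    countable_range _, ?_, ?_, ?_⟩
  · rintro S ⟨i, rfl⟩
    exact ⟨@completeTheory.isSatisfiable L (X i) (inst i) (hne i),
           fun φ => @completeTheory.mem_or_not_mem L (X i) (inst i) φ⟩
  · rintro ⟨i, hi⟩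
    obtain ⟨ψ, hψX, hψM⟩ := hdiff i
    refine hψM ?_
    have hmem : ψ ∈ L.completeTheory M := by rw [← hi]; exact hψX
    exact hmem
  · intro φ hφ
    obtain ⟨i, hi⟩ := hcov (relsIn φ) (relsIn_finite φ) (qd φ)
    refine ⟨_, ⟨i, rfl⟩, ?_⟩
    have hMφ : M ⊨ φ := hφ
    letI : L.Structure (X i) := inst i
    have key := transfer (X := M) (Y := X i) hunary (relsIn φ) (qd φ) hi φ subset_rfl
      (by omega) finZeroElim finZeroElim (fun i j => i.elim0) (fun i => i.elim0)
    have : (X i) ⊨ φ := by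
      rw [sentence_realize_iff_realize φ]
      exact key.1 ((sentence_realize_iff_realize φ).1 hMφ)
    exact this

end Glue

section SmallHelpers

variable {M : Type (max u v)} [L.Structure M]

lemma cls_congr {s : Set (L.Relations 1)} {f g : L.Relations 1 → Prop}
    (h : ∀ r ∈ s, (f r ↔ g r)) (X : Type*) [L.Structure X] : cls s f X = cls s g X := by
  ext x
  constructor <;> intro hx r hr
  · exact (hx r hr).trans (h r hr)
  · exact (hx r hr).trans (h r hr).symm

lemma min_eq_min_of_ge {K : ℕ∞} {a b : ℕ∞} (ha : K ≤ a) (hb : K ≤ b) :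
    min K a = min K b := by
  rw [min_eq_left ha, min_eq_left hb]

lemma exists_disjoint_of_pairwise {q : ℕ → Finset (L.Relations 1)}
    (hqd : ∀ i j, i ≠ j → Disjoint (q i) (q j)) {s : Set (L.Relations 1)} (hs : s.Finite) :
    ∃ j, ∀ r ∈ s, r ∉ q j := by
  by_contra hc
  push_neg at hc
  choose r hrs hrq using hc
  have hinj : Function.Injective r := by
    intro i j hij
    by_contra hne
    exact Finset.disjoint_left.1 (hqd i j hne) (hrq i) (hij ▸ hrq j)
  exact (Set.infinite_range_of_injective hinj).mono (range_subset_iff.2 hrs) hs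

open Classical in
lemma encard_blob_punit (K0 : ℕ) (P : Prop) :
    ({p : Σ _b : PUnit.{v+1}, ULift.{max u v} (Fin K0) | P}).encard =
      if P then (K0 : ℕ∞) else 0 := by
  classical
  by_cases h : P
  · rw [if_pos h]
    have huniv : {p : Σ _b : PUnit.{v+1}, ULift.{max u v} (Fin K0) | P} = univ := by
      ext p; simpa using h
    rw [huniv]
    have e : (Σ _b : PUnit.{v+1}, ULift.{max u v} (Fin K0)) ≃ Fin K0 :=
      ⟨fun p => p.2.down, fun k => ⟨PUnit.unit, ⟨k⟩⟩, fun p => by rcases p with ⟨⟨⟩, ⟨k⟩⟩; rfl,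
        fun k => rfl⟩
    calc (univ : Set (Σ _b : PUnit.{v+1}, ULift.{max u v} (Fin K0))).encard
        = (e '' univ).encard := (e.injective.encard_image _).symm
      _ = (univ : Set (Fin K0)).encard := by rw [image_univ, e.range_eq_univ]
      _ = (K0 : ℕ∞) := by simp [encard_univ]
  · rw [if_neg h]
    have : {p : Σ _b : PUnit.{v+1}, ULift.{max u v} (Fin K0) | P} = ∅ := by
      ext p; simpa using h
    rw [this, encard_empty]

end SmallHelpers

section Constructions

variable [L.IsRelational] (M : Type (max u v)) [L.Structure M]

/-- Some big class admits infinitely many pairwise-disjoint relative null patterns. -/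
def Fires (V : Finset (L.Relations 1)) : Prop :=
  ∃ f₀ : L.Relations 1 → Prop, (cls ↑V f₀ M).Infinite ∧
    ∃ (q : ℕ → Finset (L.Relations 1)) (F : ℕ → (L.Relations 1 → Prop)),
      (∀ i j, i ≠ j → Disjoint (q i) (q j)) ∧
      (∀ j, (∀ r ∈ V, (F j r ↔ f₀ r)) ∧ (cls (↑V ∪ ↑(q j)) (F j) M).Finite)

open Classical in
lemma caseFires [Nonempty M] (hunary : ∀ n, n ≠ 1 → IsEmpty (L.Relations n))
    {V : Finset (L.Relations 1)} (hF : Fires M V) :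
    ∃ 𝒯 : Set L.Theory, 𝒯.Countable ∧ (∀ S ∈ 𝒯, CompleteTheory S) ∧
      Approximated 𝒯 (L.completeTheory M) := by
  classical
  obtain ⟨f₀, hbig, q, F, hqd, hFj⟩ := hF
  obtain ⟨c, hc⟩ := exists_limitColor (L := L) (M := M) hbig
  have hcV : ∀ r ∈ (V : Set (L.Relations 1)), (c r ↔ f₀ r) :=
    limitColor_agrees (L := L) (M := M) hc subset_rfl
  set χ : ℕ → L.Relations 1 → Prop := fun j r => if r ∈ q j then F j r else c r with hχ
  refine glue hunary (I := ℕ)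
    (fun j => MemberCarrier (univ : Set M) (fun _ : PUnit.{v+1} => 1))
    (fun j => memberStruct (univ : Set M) (fun _ : PUnit.{v+1} => 1) (fun _ => χ j) hunary)
    (fun j => ⟨Sum.inr ⟨PUnit.unit, ULift.up 0⟩⟩) ?_ ?_
  · -- difference sentences
    intro j
    letI : L.Structure (MemberCarrier (univ : Set M) (fun _ : PUnit.{v+1} => 1)) :=
      memberStruct (univ : Set M) (fun _ : PUnit.{v+1} => 1) (fun _ => χ j) hunary
    obtain ⟨hagree, hfin⟩ := hFj j
    set m := hfin.toFinset.card with hm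
    have hmE : (cls (↑(V ∪ q j)) (F j) M).encard = (m : ℕ∞) := by
      rw [Finset.coe_union]
      exact hfin.encard_eq_coe_toFinset_card
    have hmatch : ∀ r ∈ (↑(V ∪ q j) : Set (L.Relations 1)), (χ j r ↔ F j r) := by
      intro r hr
      rw [Finset.coe_union, mem_union] at hr
      by_cases hq : r ∈ q j
      · simp only [hχ, if_pos hq]
      · simp only [hχ, if_neg hq]
        rcases hr with hr | hr
        · exact (hcV r hr).trans (hagree r hr).symm
        · exact absurd (Finset.mem_coe.1 hr) hq
    refine ⟨exGe (m + 1) (V ∪ q j) (F j), ?_, ?_⟩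
    · rw [realize_exGe, encard_cls_member (univ : Set M) (fun _ : PUnit.{v+1} => 1)
        (fun _ => χ j) hunary, univ_inter, encard_blob_punit, if_pos hmatch, hmE]
      norm_num
    · rw [realize_exGe, hmE]
      intro h
      rw [show ((m + 1 : ℕ) : ℕ∞) = (m : ℕ∞) + 1 from by push_cast; ring] at h
      have := (ENat.add_one_le_iff (by simp)).1 h
      exact lt_irrefl _ this
  · -- coverage
    intro s hs K
    obtain ⟨j, hj⟩ := exists_disjoint_of_pairwise (L := L) hqd hs
    refine ⟨j, fun g => ?_⟩
    letI : L.Structure (MemberCarrier (univ : Set M) (fun _ : PUnit.{v+1} => 1)) :=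
      memberStruct (univ : Set M) (fun _ : PUnit.{v+1} => 1) (fun _ => χ j) hunary
    rw [encard_cls_member (univ : Set M) (fun _ : PUnit.{v+1} => 1)
      (fun _ => χ j) hunary, univ_inter, encard_blob_punit]
    by_cases hmatch : ∀ r ∈ s, (χ j r ↔ g r)
    · rw [if_pos hmatch]
      have hcg : ∀ r ∈ s, (g r ↔ c r) := by
        intro r hr
        have := hmatch r hr
        rw [hχ] at this
        simp only [if_neg (hj r hr)] at this
        exact this.symm
      have hinf : (cls s g M).Infinite := by
        rw [cls_congr hcg M]
        exact (hc s hs).mono inter_subset_right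
      rw [hinf.encard_eq]
      simp
    · rw [if_neg hmatch, add_zero]

end Constructions

section CaseG

variable [L.IsRelational] (M : Type (max u v)) [L.Structure M]

/-- Boolean pattern on a finite support, as a predicate on all relations. -/
def pext (V : Finset (L.Relations 1)) (b : {r // r ∈ V} → Bool) : L.Relations 1 → Prop :=
  fun r => ∃ h : r ∈ V, b ⟨r, h⟩ = true

lemma exists_bigPattern' (V : Finset (L.Relations 1)) {C : Set M} (hC : C.Infinite) :
    ∃ b : {r // r ∈ V} → Bool, (C ∩ cls ↑V (pext V b) M).Infinite := by
  classical
  by_contra hc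
  push_neg at hc
  have hcover : C ⊆ ⋃ b : {r // r ∈ V} → Bool, (C ∩ cls ↑V (pext V b) M) := by
    intro x hx
    refine mem_iUnion.2 ⟨fun r => decide (Structure.RelMap r.1 ![x]), hx, fun r hr => ?_⟩
    rw [pext]
    constructor
    · intro h; exact ⟨hr, by simpa using h⟩
    · rintro ⟨h₁, h₂⟩; simpa using h₂
  exact hC (Finite.subset (finite_iUnion fun b => hc b) hcover)

/-- The set of elements whose full pattern on `V` has finite class. -/
def smallSet (V : Finset (L.Relations 1)) : Set M :=
  {x : M | (cls ↑V (colorOf (L := L) x) M).Finite}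

lemma smallSet_finite (V : Finset (L.Relations 1)) : (smallSet M V).Finite := by
  classical
  have hcover : smallSet M V ⊆ ⋃ b : {b : {r // r ∈ V} → Bool //
      (cls ↑V (pext V b) M).Finite}, cls ↑V (pext V b.1) M := by
    intro x hx
    have hx' : x ∈ cls ↑V (colorOf (L := L) x) M := fun r hr => Iff.rfl
    have key : cls ↑V (pext V (fun r => decide (colorOf (L := L) x r.1))) M =
        cls ↑V (colorOf (L := L) x) M := by
      refine cls_congr (fun r hr => ?_) M
      rw [pext]
      constructor
      · rintro ⟨h₁, h₂⟩; simpa using h₂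
      · intro h; exact ⟨hr, by simpa using h⟩
    refine mem_iUnion.2 ⟨⟨fun r => decide (colorOf (L := L) x r.1), by rw [key]; exact hx⟩, ?_⟩
    rw [key]
    exact hx'
  exact Finite.subset (finite_iUnion fun b => b.2) hcover

open Classical in
lemma encard_blob_ge {β : Type v} (K1 : ℕ) (P : β → Prop) (b : β) (hb : P b) :
    (K1 : ℕ∞) ≤ ({p : Σ _b : β, ULift.{max u v} (Fin K1) | P p.1}).encard := by
  classical
  set ι : Fin K1 → (Σ _b : β, ULift.{max u v} (Fin K1)) := fun k => ⟨b, ULift.up k⟩ with hι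
  have himg : ι '' univ ⊆ {p | P p.1} := by rintro _ ⟨k, _, rfl⟩; exact hb
  have hinj : Function.Injective ι := by
    intro k k' h
    rw [hι] at h
    have h2 := (Sigma.mk.inj_iff.1 h).2
    have h3 := eq_of_heq h2
    exact congrArg ULift.down h3
  calc (K1 : ℕ∞) = (univ : Set (Fin K1)).encard := by simp [encard_univ]
    _ = (ι '' univ).encard := (hinj.encard_image _).symm
    _ ≤ _ := encard_le_encard himg

lemma cls_empty (f : L.Relations 1 → Prop) (X : Type*) [L.Structure X] :
    cls ∅ f X = univ := by
  ext x; simp [cls]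

open Classical in
lemma caseG [Nonempty M] [Infinite M] (hunary : ∀ n, n ≠ 1 → IsEmpty (L.Relations n))
    (V' : ℕ → Finset (L.Relations 1)) (hcover : ∀ r : L.Relations 1, ∃ i, r ∈ V' i)
    (hmono : ∀ i j, i ≤ j → V' i ⊆ V' j) :
    ∃ 𝒯 : Set L.Theory, 𝒯.Countable ∧ (∀ S ∈ 𝒯, CompleteTheory S) ∧
      Approximated 𝒯 (L.completeTheory M) := by
  classical
  set B : ℕ → Type v := fun i => {b : {r // r ∈ V' i} → Bool //
    (cls ↑(V' i) (pext (V' i) b) M).Infinite} with hB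
  set χ : ∀ i, B i → (L.Relations 1 → Prop) :=
    fun i b => Classical.choose (exists_limitColor (L := L) (M := M) b.2) with hχdef
  have hχ_lim : ∀ i (b : B i), ∀ s : Set (L.Relations 1), s.Finite →
      ((cls ↑(V' i) (pext (V' i) b.1) M) ∩ cls s (χ i b) M).Infinite :=
    fun i b => Classical.choose_spec (exists_limitColor (L := L) (M := M) b.2)
  have hχ_agree : ∀ i (b : B i), ∀ r ∈ (↑(V' i) : Set (L.Relations 1)),
      (χ i b r ↔ pext (V' i) b.1 r) :=
    fun i b => limitColor_agrees (L := L) (M := M) (hχ_lim i b) subset_rfl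
  have hBne : ∀ i, Nonempty (B i) := by
    intro i
    obtain ⟨b, hb⟩ := exists_bigPattern' M (V' i) (infinite_univ)
    exact ⟨⟨b, by rw [← univ_inter (cls _ _ M)]; exact hb⟩⟩
  refine glue hunary (I := ℕ × ℕ)
    (fun p => MemberCarrier (smallSet M (V' p.1)) (fun _ : B p.1 => p.2 + 1))
    (fun p => memberStruct _ _ (χ p.1) hunary)
    (fun p => ⟨Sum.inr ⟨(hBne p.1).some, ULift.up 0⟩⟩) ?_ ?_
  · -- difference sentences: members are finite structures
    rintro ⟨i, K0⟩
    letI : L.Structure (MemberCarrier (smallSet M (V' i)) (fun _ : B i => K0 + 1)) :=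
      memberStruct _ _ (χ i) hunary
    haveI hfin1 : Finite ↥(smallSet M (V' i)) := (smallSet_finite M (V' i)).to_subtype
    haveI hfin2 : Finite (B i) := by
      rw [hB]
      exact Subtype.finite
    haveI hfinX : Finite (MemberCarrier (smallSet M (V' i)) (fun _ : B i => K0 + 1)) := by
      rw [MemberCarrier]
      infer_instance
    have hfinU : (univ : Set (MemberCarrier (smallSet M (V' i)) (fun _ : B i => K0 + 1))).Finite :=
      finite_univ
    set n₀ := hfinU.toFinset.card with hn₀
    refine ⟨(exGe (n₀ + 1) ∅ (fun _ => True)).not, ?_, ?_⟩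
    · rw [Sentence.realize_not, realize_exGe, Finset.coe_empty, cls_empty,
        hfinU.encard_eq_coe_toFinset_card]
      intro h
      have h2 : n₀ + 1 ≤ n₀ := by exact_mod_cast h
      omega
    · rw [Sentence.realize_not, realize_exGe, Finset.coe_empty, cls_empty, not_not]
      rw [(infinite_univ : (univ : Set M).Infinite).encard_eq]
      exact le_top
  · -- coverage
    intro s hs K
    choose idx hidx using hcover
    set i := hs.toFinset.sup idx with hi
    have hsV : s ⊆ ↑(V' i) := by
      intro r hr
      exact hmono (idx r) i (Finset.le_sup (hs.mem_toFinset.2 hr)) (hidx r)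
    refine ⟨(i, K), fun g => ?_⟩
    letI : L.Structure (MemberCarrier (smallSet M (V' i)) (fun _ : B i => K + 1)) :=
      memberStruct _ _ (χ i) hunary
    rw [encard_cls_member (smallSet M (V' i)) (fun _ : B i => K + 1) (χ i) hunary]
    by_cases hbig : ∃ b : B i, ∀ r ∈ s, (pext (V' i) b.1 r ↔ g r)
    · obtain ⟨b, hb⟩ := hbig
      have hMside : (cls s g M).Infinite := by
        refine ((b.2).mono ?_)
        intro x hx r hr
        exact (hx r (hsV hr)).trans (hb r hr)
      have hmatch : ∀ r ∈ s, (χ i b r ↔ g r) := by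
        intro r hr
        exact (hχ_agree i b r (hsV hr)).trans (hb r hr)
      have hblob : ((K : ℕ∞) + 1) ≤
          ({p : Σ _b : B i, ULift.{max u v} (Fin (K + 1)) | ∀ r ∈ s, (χ i p.1 r ↔ g r)}).encard := by
        have := encard_blob_ge (K + 1) (fun b' : B i => ∀ r ∈ s, (χ i b' r ↔ g r)) b hmatch
        calc ((K : ℕ∞) + 1) = ((K + 1 : ℕ) : ℕ∞) := by push_cast; ring
          _ ≤ _ := this
      refine min_eq_min_of_ge ?_ ?_
      · rw [hMside.encard_eq]; exact le_top
      · calc (K : ℕ∞) ≤ (K : ℕ∞) + 1 := le_self_add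
          _ ≤ _ := hblob.trans le_add_self
    · have hblob0 : ({p : Σ _b : B i, ULift.{max u v} (Fin (K + 1)) |
          ∀ r ∈ s, (χ i p.1 r ↔ g r)}) = ∅ := by
        ext p
        simp only [mem_setOf_eq, mem_empty_iff_false, iff_false]
        intro hp
        refine hbig ⟨p.1, fun r hr => ?_⟩
        exact (hχ_agree i p.1 r (hsV hr)).symm.trans (hp r hr)
      rw [hblob0, encard_empty, add_zero]
      have hsub : cls s g M ⊆ smallSet M (V' i) := by
        intro x hx
        by_contra hxs
        have hinf : (cls ↑(V' i) (colorOf (L := L) x) M).Infinite := hxs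
        set bx : {r // r ∈ V' i} → Bool := fun r => decide (colorOf (L := L) x r.1) with hbx
        have key : cls ↑(V' i) (pext (V' i) bx) M = cls ↑(V' i) (colorOf (L := L) x) M := by
          refine cls_congr (fun r hr => ?_) M
          rw [pext]
          constructor
          · rintro ⟨h₁, h₂⟩; simpa [hbx] using h₂
          · intro h; exact ⟨hr, by simpa [hbx] using h⟩
        refine hbig ⟨⟨bx, by rw [key]; exact hinf⟩, fun r hr => ?_⟩
        have h1 : pext (V' i) bx r ↔ colorOf (L := L) x r := by
          rw [pext]
          constructor
          · rintro ⟨h₁, h₂⟩; simpa [hbx] using h₂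
          · intro h; exact ⟨hsV hr, by simpa [hbx] using h⟩
        exact h1.trans (hx r hr)
      rw [inter_eq_self_of_subset_right hsub]
end CaseG

section CaseH

variable [L.IsRelational] (M : Type (max u v)) [L.Structure M]

open Classical in
lemma caseH [Nonempty M] [Infinite M] (hunary : ∀ n, n ≠ 1 → IsEmpty (L.Relations n))
    (V : ℕ → Finset (L.Relations 1))
    (hmono : ∀ a b : ℕ, a ≤ b → V a ⊆ V b)
    (P : ∀ (i : ℕ) (f : L.Relations 1 → Prop), (cls ↑(V i) f M).Infinite →
      ∀ sF : Finset (L.Relations 1), ((↑sF : Set (L.Relations 1)) ∩ ↑(V (i+1))) = ∅ →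
      (cls (↑(V i) ∪ ↑sF) f M).Infinite)
    (R' : ℕ → L.Relations 1) (hR'inj : Function.Injective R')
    (hR'out : ∀ j i, R' j ∉ V i) :
    ∃ 𝒯 : Set L.Theory, 𝒯.Countable ∧ (∀ S ∈ 𝒯, CompleteTheory S) ∧
      Approximated 𝒯 (L.completeTheory M) := by
  classical
  -- big patterns
  set e : ℕ → (L.Relations 1 → Prop) :=
    fun i => pext (V i) (Classical.choose (exists_bigPattern' M (V i) infinite_univ)) with he
  have hbig : ∀ i, (cls ↑(V i) (e i) M).Infinite := by
    intro i
    have := Classical.choose_spec (exists_bigPattern' M (V i) infinite_univ)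
    rw [univ_inter] at this
    exact this
  -- cut patterns
  set cutP : ℕ → ℕ → (L.Relations 1 → Prop) := fun i j r => r = R' j ∨ e i r with hcutP
  set cutS : ℕ → ℕ → Finset (L.Relations 1) := fun i j => insert (R' j) (V i) with hcutS
  have hcut_on_V : ∀ i j, ∀ r ∈ (↑(V i) : Set (L.Relations 1)), (cutP i j r ↔ e i r) := by
    intro i j r hr
    simp only [hcutP]
    constructor
    · rintro (rfl | h)
      · exact absurd (Finset.mem_coe.1 hr) (hR'out j i)
      · exact h
    · exact Or.inr
  have hCcut : ∀ i j, (cls ↑(cutS i j) (cutP i j) M).Infinite := by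
    intro i j
    have h1 : (cls ↑(V i) (cutP i j) M).Infinite := by
      rw [cls_congr (hcut_on_V i j) M]
      exact hbig i
    have h2 := P i (cutP i j) h1 {R' j} (by
      ext r
      simp only [Finset.coe_singleton, mem_inter_iff, mem_singleton_iff, Finset.mem_coe,
        mem_empty_iff_false, iff_false, not_and]
      rintro rfl
      exact hR'out j (i+1))
    have h3 : (↑(V i) : Set (L.Relations 1)) ∪ ↑({R' j} : Finset (L.Relations 1)) =
        ↑(cutS i j) := by
      simp only [hcutS, Finset.coe_insert, Finset.coe_singleton]
      rw [union_comm]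
      rfl
    rwa [h3] at h2
  -- limit colors on the cut classes
  set c : ℕ → ℕ → (L.Relations 1 → Prop) :=
    fun i j => Classical.choose (exists_limitColor (L := L) (M := M) (hCcut i j)) with hcdef
  have hc_lim : ∀ i j, ∀ s : Set (L.Relations 1), s.Finite →
      ((cls ↑(cutS i j) (cutP i j) M) ∩ cls s (c i j) M).Infinite :=
    fun i j => Classical.choose_spec (exists_limitColor (L := L) (M := M) (hCcut i j))
  have hc_agree : ∀ i j, ∀ r ∈ (↑(cutS i j) : Set (L.Relations 1)), (c i j r ↔ cutP i j r) :=
    fun i j => limitColor_agrees (L := L) (M := M) (hc_lim i j) subset_rfl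
  -- members
  refine glue hunary (I := (ℕ × ℕ) × ℕ)
    (fun p => MemberCarrier ((cls ↑(cutS p.1.1 p.1.2) (cutP p.1.1 p.1.2) M)ᶜ)
      (fun _ : PUnit.{v+1} => p.2 + 1))
    (fun p => memberStruct _ _ (fun _ => c p.1.1 p.1.2) hunary)
    (fun p => ⟨Sum.inr ⟨PUnit.unit, ULift.up 0⟩⟩) ?_ ?_
  · -- difference sentences
    rintro ⟨⟨i, j⟩, K0⟩
    letI : L.Structure (MemberCarrier ((cls ↑(cutS i j) (cutP i j) M)ᶜ)
        (fun _ : PUnit.{v+1} => K0 + 1)) := memberStruct _ _ (fun _ => c i j) hunary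
    refine ⟨(exGe (K0 + 2) (cutS i j) (cutP i j)).not, ?_, ?_⟩
    · rw [Sentence.realize_not, realize_exGe, encard_cls_member _ _ (fun _ => c i j) hunary,
        compl_inter_self, encard_empty, zero_add, encard_blob_punit]
      intro hcon
      have hle : ((K0 + 2 : ℕ) : ℕ∞) ≤ ((K0 + 1 : ℕ) : ℕ∞) := by
        refine hcon.trans ?_
        split
        · exact le_rfl
        · exact bot_le
      rw [Nat.cast_le] at hle
      omega
    · rw [Sentence.realize_not, not_not, realize_exGe, (hCcut i j).encard_eq]
      exact le_top
  · -- coverage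
    intro s hs K
    -- stage index
    set idx : L.Relations 1 → ℕ := fun r => if h : ∃ n, r ∈ V n then h.choose else 0 with hidx
    set i := hs.toFinset.sup idx with hi
    have hsV : ∀ r ∈ s, (∃ n, r ∈ V n) → r ∈ V i := by
      intro r hr hex
      have h1 : r ∈ V hex.choose := hex.choose_spec
      have h2 : idx r = hex.choose := by rw [hidx]; exact dif_pos hex
      exact hmono _ _ (h2 ▸ Finset.le_sup (hs.mem_toFinset.2 hr)) h1
    -- fresh relation
    have hfresh : ∃ j, R' j ∉ s := by
      by_contra hc
      push_neg at hc
      exact (Set.infinite_range_of_injective hR'inj).mono (range_subset_iff.2 hc) hs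
    obtain ⟨j, hj⟩ := hfresh
    have hsdisj : ∀ sub : Set (L.Relations 1), sub ⊆ s →
        ((↑(hs.toFinset \ V i) : Set (L.Relations 1)) ∩ ↑(V (i+1))) = ∅ := by
      intro _ _
      ext r
      simp only [Finset.coe_sdiff, mem_inter_iff, mem_diff, Finset.mem_coe,
        hs.mem_toFinset, mem_empty_iff_false, iff_false, not_and]
      rintro ⟨hrs, hrV⟩ hrV1
      exact hrV (hsV r hrs ⟨i+1, hrV1⟩)
    refine ⟨((i, j), K), fun g => ?_⟩
    letI : L.Structure (MemberCarrier ((cls ↑(cutS i j) (cutP i j) M)ᶜ)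
        (fun _ : PUnit.{v+1} => K + 1)) := memberStruct _ _ (fun _ => c i j) hunary
    rw [encard_cls_member _ _ (fun _ => c i j) hunary, encard_blob_punit]
    by_cases hD : (cls s g M).Infinite
    · -- the cut part misses an infinite chunk of the class
      obtain ⟨b, hb⟩ := exists_bigPattern' M (V i) hD
      set g' := pext (V i) b with hg'
      obtain ⟨x₀, hx₀D, hx₀g'⟩ := hb.nonempty
      have hgg' : ∀ r ∈ s, r ∈ V i → (g' r ↔ g r) := by
        intro r hrs hrV
        exact (hx₀g' r hrV).symm.trans (hx₀D r hrs)
      set κ : L.Relations 1 → Prop :=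
        fun r => if r ∈ V i then g' r else (if r = R' j then False else g r) with hκ
      have hκbig : (cls ↑(V i) κ M).Infinite := by
        have : cls ↑(V i) κ M = cls ↑(V i) g' M := by
          refine cls_congr (fun r hr => ?_) M
          simp only [hκ, if_pos (Finset.mem_coe.1 hr)]
        rw [this]
        exact hb.mono inter_subset_right
      set sF := insert (R' j) (hs.toFinset \ V i) with hsF
      have hsFdisj : ((↑sF : Set (L.Relations 1)) ∩ ↑(V (i+1))) = ∅ := by
        rw [hsF]
        ext r
        simp only [Finset.coe_insert, mem_inter_iff, mem_insert_iff, Finset.coe_sdiff,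
          mem_diff, Finset.mem_coe, hs.mem_toFinset, mem_empty_iff_false, iff_false, not_and]
        rintro (rfl | ⟨hrs, hrV⟩) hrV1
        · exact hR'out j (i+1) hrV1
        · exact hrV (hsV r hrs ⟨i+1, hrV1⟩)
      have happ := P i κ hκbig sF hsFdisj
      have hsub : cls (↑(V i) ∪ ↑sF) κ M ⊆
          (cls ↑(cutS i j) (cutP i j) M)ᶜ ∩ cls s g M := by
        intro x hx
        have hxR' : ¬ Structure.RelMap (R' j) ![x] := by
          have hmem : R' j ∈ (↑(V i) : Set (L.Relations 1)) ∪ ↑sF := by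
            right
            rw [hsF]
            simp
          have := hx _ hmem
          rw [hκ] at this
          simp only [if_neg (hR'out j i), if_pos rfl] at this
          rw [this]
          exact not_false
        constructor
        · intro hcut
          have hmem : R' j ∈ (↑(cutS i j) : Set (L.Relations 1)) := by
            rw [hcutS]; simp
          have := hcut _ hmem
          rw [hcutP] at this
          simp only [eq_self_iff_true, true_or, iff_true] at this
          exact hxR' this
        · intro r hrs
          by_cases hrV : r ∈ V i
          · have := hx r (Or.inl (Finset.mem_coe.2 hrV))
            rw [hκ] at this
            simp only [if_pos hrV] at this
            exact this.trans (hgg' r hrs hrV)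
          · have hrsF : r ∈ (↑(V i) : Set (L.Relations 1)) ∪ ↑sF := by
              right
              rw [hsF]
              simp only [Finset.coe_insert, mem_insert_iff, Finset.coe_sdiff, mem_diff,
                Finset.mem_coe, hs.mem_toFinset]
              right
              exact ⟨hrs, hrV⟩
            have := hx r hrsF
            rw [hκ] at this
            have hrR' : r ≠ R' j := fun hcon => hj (hcon ▸ hrs)
            simp only [if_neg hrV, if_neg hrR'] at this
            exact this
      have hNinf : ((cls ↑(cutS i j) (cutP i j) M)ᶜ ∩ cls s g M).Infinite :=
        happ.mono hsub
      refine min_eq_min_of_ge ?_ ?_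
      · rw [hD.encard_eq]; exact le_top
      · rw [hNinf.encard_eq]
        simp
    · -- finite class: untouched by the cut
      have hDfin : (cls s g M).Finite := not_infinite.1 hD
      have hDA : (cls ↑(cutS i j) (cutP i j) M)ᶜ ∩ cls s g M = cls s g M := by
        rw [inter_eq_self_of_subset_right]
        intro x hxD hxCut
        -- x in the cut class and in D: contradiction with D finite
        have hκbig : (cls ↑(V i) (colorOf (L := L) x) M).Infinite := by
          have : cls ↑(V i) (colorOf (L := L) x) M = cls ↑(V i) (e i) M := by
            refine cls_congr (fun r hr => ?_) M
            have h1 : Structure.RelMap r ![x] ↔ cutP i j r := by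
              refine hxCut r ?_
              rw [hcutS]
              simp only [Finset.coe_insert, mem_insert_iff]
              right
              exact hr
            exact h1.trans (hcut_on_V i j r hr)
          rw [this]
          exact hbig i
        have happ := P i (colorOf (L := L) x) hκbig (hs.toFinset \ V i)
          (hsdisj s subset_rfl)
        have hsub2 : cls (↑(V i) ∪ ↑(hs.toFinset \ V i)) (colorOf (L := L) x) M ⊆
            cls s g M := by
          intro x' hx' r hrs
          have hrx : Structure.RelMap r ![x'] ↔ colorOf (L := L) x r := by
            by_cases hrV : r ∈ V i
            · exact hx' r (Or.inl (Finset.mem_coe.2 hrV))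
            · refine hx' r (Or.inr ?_)
              simp only [Finset.coe_sdiff, mem_diff, Finset.mem_coe, hs.mem_toFinset]
              exact ⟨hrs, hrV⟩
          exact hrx.trans (hxD r hrs)
        exact (happ.mono hsub2) hDfin
      rw [hDA]
      have hnomatch : ¬ (∀ r ∈ s, (c i j r ↔ g r)) := by
        intro hmatch
        have : cls s (c i j) M = cls s g M := cls_congr hmatch M
        have hinf := (hc_lim i j s hs).mono inter_subset_right
        rw [this] at hinf
        exact hinf hDfin
      rw [if_neg hnomatch, add_zero]

end CaseH

section Master

variable [L.IsRelational] (M : Type (max u v)) [L.Structure M]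

open Classical in
lemma step_of_not_fires [Nonempty M] (Vc : Finset (L.Relations 1)) (hnf : ¬ Fires M Vc) :
    ∃ W : Finset (L.Relations 1), Vc ⊆ W ∧
      ∀ (f : L.Relations 1 → Prop), (cls ↑Vc f M).Infinite →
      ∀ sF : Finset (L.Relations 1), ((↑sF : Set (L.Relations 1)) ∩ ↑W) = ∅ →
        (cls (↑Vc ∪ ↑sF) f M).Infinite := by
  classical
  have htouch : ∀ b : {r // r ∈ Vc} → Bool, ∃ Wb : Finset (L.Relations 1),
      ∀ sF ∈ {sF : Finset (L.Relations 1) | (cls ↑Vc (pext Vc b) M).Infinite ∧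
        ∃ F : L.Relations 1 → Prop, (∀ r ∈ Vc, (F r ↔ pext Vc b r)) ∧
          (cls (↑Vc ∪ ↑sF) F M).Finite}, ¬ Disjoint Wb sF := by
    intro b
    apply exists_toucher
    rintro ⟨q, hqmem, hqdis⟩
    refine hnf ⟨pext Vc b, (hqmem 0).1, q, fun j => (hqmem j).2.choose, hqdis, fun j => ?_⟩
    exact ⟨(hqmem j).2.choose_spec.1, (hqmem j).2.choose_spec.2⟩
  choose Wb hWb using htouch
  refine ⟨Vc ∪ Finset.biUnion (Finset.univ : Finset ({r // r ∈ Vc} → Bool)) Wb,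
    Finset.subset_union_left, ?_⟩
  intro f hbig sF hdisj
  by_contra hfin
  rw [not_infinite] at hfin
  set b : {r // r ∈ Vc} → Bool := fun r => decide (f r.1) with hb
  have hagree : ∀ r ∈ Vc, (f r ↔ pext Vc b r) := by
    intro r hr
    rw [pext]
    constructor
    · intro h; exact ⟨hr, by simpa [hb] using h⟩
    · rintro ⟨h₁, h₂⟩; simpa [hb] using h₂
  have hbig' : (cls ↑Vc (pext Vc b) M).Infinite := by
    rwa [cls_congr (fun r hr => (hagree r (Finset.mem_coe.1 hr))) M] at hbig
  have hmem : sF ∈ {sF : Finset (L.Relations 1) | (cls ↑Vc (pext Vc b) M).Infinite ∧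
      ∃ F : L.Relations 1 → Prop, (∀ r ∈ Vc, (F r ↔ pext Vc b r)) ∧
        (cls (↑Vc ∪ ↑sF) F M).Finite} :=
    ⟨hbig', f, hagree, hfin⟩
  refine hWb b sF hmem (Finset.disjoint_left.2 ?_)
  intro r hrW hrs
  have : r ∈ (↑sF : Set (L.Relations 1)) ∩
      ↑(Vc ∪ Finset.biUnion (Finset.univ : Finset ({r // r ∈ Vc} → Bool)) Wb) := by
    refine ⟨hrs, ?_⟩
    rw [Finset.coe_union]
    right
    rw [Finset.mem_coe, Finset.mem_biUnion]
    exact ⟨b, Finset.mem_univ b, hrW⟩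
  rw [hdisj] at this
  exact this

open Classical in
lemma master [Nonempty M] [Infinite M] (hunary : ∀ n, n ≠ 1 → IsEmpty (L.Relations n)) :
    ∃ 𝒯 : Set L.Theory, 𝒯.Countable ∧ (∀ S ∈ 𝒯, CompleteTheory S) ∧
      Approximated 𝒯 (L.completeTheory M) := by
  classical
  by_cases hcnt : Countable (L.Relations 1)
  · -- countable language
    rcases isEmpty_or_nonempty (L.Relations 1) with hemp | hne
    · exact caseG M hunary (fun _ => ∅) (fun r => isEmptyElim r) (fun i j _ => subset_rfl)
    · obtain ⟨fe, hfe⟩ := exists_surjective_nat (L.Relations 1)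
      refine caseG M hunary (fun i => (Finset.range i).image fe) (fun r => ?_) (fun i j hij => ?_)
      · obtain ⟨n, rfl⟩ := hfe r
        exact ⟨n + 1, Finset.mem_image.2 ⟨n, Finset.mem_range.2 (Nat.lt_succ_self n), rfl⟩⟩
      · exact Finset.image_subset_image (Finset.range_subset_range.2 hij)
  · -- uncountable language: build the chain
    set V : ℕ → Finset (L.Relations 1) := fun n => Nat.rec ∅
      (fun _ Vc => if h : Fires M Vc then Vc else (step_of_not_fires M Vc h).choose) n with hV
    have hVsucc : ∀ i, V (i + 1) =
        if h : Fires M (V i) then V i else (step_of_not_fires M (V i) h).choose := fun i => rfl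
    by_cases hfire : ∃ i, Fires M (V i)
    · obtain ⟨i, hi⟩ := hfire
      exact caseFires M hunary hi
    · push_neg at hfire
      have hstep : ∀ i, V (i + 1) = (step_of_not_fires M (V i) (hfire i)).choose := by
        intro i
        rw [hVsucc i, dif_neg (hfire i)]
      have hmono1 : ∀ i, V i ⊆ V (i + 1) := by
        intro i
        rw [hstep i]
        exact (step_of_not_fires M (V i) (hfire i)).choose_spec.1
      have hmono : ∀ a b : ℕ, a ≤ b → V a ⊆ V b := by
        intro a b hab
        induction b with
        | zero => cases Nat.le_zero.1 hab; exact subset_rfl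
        | succ n ih =>
          rcases Nat.lt_or_ge a (n + 1) with h | h
          · exact (ih (Nat.lt_succ_iff.1 h)).trans (hmono1 n)
          · cases Nat.le_antisymm hab h; exact subset_rfl
      have hP : ∀ (i : ℕ) (f : L.Relations 1 → Prop), (cls ↑(V i) f M).Infinite →
          ∀ sF : Finset (L.Relations 1), ((↑sF : Set (L.Relations 1)) ∩ ↑(V (i+1))) = ∅ →
          (cls (↑(V i) ∪ ↑sF) f M).Infinite := by
        intro i f hbig sF hdisj
        refine (step_of_not_fires M (V i) (hfire i)).choose_spec.2 f hbig sF ?_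
        rw [← hstep i]
        exact hdisj
      -- the complement of the chain is infinite
      set Z : Set (L.Relations 1) := {r | ∀ i, r ∉ V i} with hZ
      have hZinf : Z.Infinite := by
        by_contra hZfin
        rw [not_infinite] at hZfin
        refine hcnt ?_
        rw [← countable_univ_iff]
        have : (univ : Set (L.Relations 1)) ⊆ Z ∪ ⋃ i, ↑(V i) := by
          intro r _
          by_cases h : ∀ i, r ∉ V i
          · exact Or.inl h
          · push_neg at h
            obtain ⟨i, hi⟩ := h
            exact Or.inr (mem_iUnion.2 ⟨i, hi⟩)
        exact Countable.mono this (Countable.union hZfin.countable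
          (countable_iUnion (fun i => (V i).countable_toSet)))
      set emb := Set.Infinite.natEmbedding Z hZinf with hemb
      refine caseH M hunary V hmono hP (fun j => (emb j : L.Relations 1)) ?_ ?_
      · intro a b hab
        exact emb.injective (Subtype.ext hab)
      · intro j i
        exact (emb j).2 i

end Master

/-- a complete theory of a purely unary relational language, all of whose models
are infinite, is countably approximable. -/
theorem unary_countably_approximable
    {L : FirstOrder.Language.{u, v}} [L.IsRelational]
    (hunary : ∀ n, n ≠ 1 → IsEmpty (L.Relations n))
    (T : L.Theory) (hT : CompleteTheory T)
    (hinf : ∀ M : Theory.ModelType.{u, v, max u v} T, Infinite M) :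
    ∃ 𝒯 : Set L.Theory, 𝒯.Countable ∧ (∀ S ∈ 𝒯, CompleteTheory S) ∧
      Approximated 𝒯 T := by
  classical
  obtain ⟨M₀⟩ := hT.1
  haveI : Infinite M₀ := hinf M₀
  have hTeq : T = L.completeTheory M₀ := by
    ext φ
    constructor
    · intro h
      exact Theory.realize_sentence_of_mem (M := M₀) T h
    · intro h
      rcases hT.2 φ with h' | h'
      · exact h'
      · exfalso
        have hn := Theory.realize_sentence_of_mem (M := M₀) T h'
        rw [Sentence.realize_not] at hn
        exact hn h
  rw [hTeq]
  exact master M₀ hunary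

end Approx
end

section
/- Let 𝒯 be an E-closed family of complete theories whose set of accumulation points is finite and nonempty, of size n. Then 𝒯 can be represented as a disjoint union of n subfamilies 𝒯₁, …, 𝒯ₙ (pairwise disjoint, with union 𝒯) each of which is e-categorical, i.e., each 𝒯_k has exactly one accumulation point. -/
open FirstOrder Language Set

universe u v

namespace Approx

variable {L : FirstOrder.Language.{u, v}}

lemma mem_iff_realize {S : L.Theory} (hS : CompleteTheory S) (φ : L.Sentence) :
    φ ∈ S ↔ ∀ M : Theory.ModelType.{u, v, max u v} S, M ⊨ φ := by
  constructor
  · intro h M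
    exact S.realize_sentence_of_mem h
  · intro h
    rcases hS.2 φ with h' | h'
    · exact h'
    · obtain ⟨M⟩ := hS.1
      exact absurd (h M) ((Sentence.realize_not _).mp (S.realize_sentence_of_mem h'))

lemma not_mem_iff {S : L.Theory} (hS : CompleteTheory S) (φ : L.Sentence) :
    φ.not ∈ S ↔ φ ∉ S := by
  constructor
  · intro h h'
    obtain ⟨M⟩ := hS.1
    exact absurd (S.realize_sentence_of_mem (M := M) h')
      ((Sentence.realize_not _).mp (S.realize_sentence_of_mem (M := M) h))
  · intro h
    exact (hS.2 φ).resolve_left h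

def conj : List L.Sentence → L.Sentence
  | [] => ⊤
  | ψ :: l => ψ ⊓ conj l

lemma realize_conj {M : Type (max u v)} [L.Structure M] (l : List L.Sentence) :
    M ⊨ conj l ↔ ∀ ψ ∈ l, M ⊨ ψ := by
  induction l with
  | nil => simp [conj, Sentence.Realize]
  | cons a l ih =>
      simp only [conj, Sentence.Realize, Formula.realize_inf, List.mem_cons] at *
      constructor
      · rintro ⟨h1, h2⟩ ψ (rfl | hψ)
        · exact h1
        · exact ih.mp h2 ψ hψ
      · intro h
        exact ⟨h a (Or.inl rfl), ih.mpr fun ψ hψ => h ψ (Or.inr hψ)⟩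

lemma conj_mem_iff {S : L.Theory} (hS : CompleteTheory S) (l : List L.Sentence) :
    conj l ∈ S ↔ ∀ ψ ∈ l, ψ ∈ S := by
  rw [mem_iff_realize hS]
  simp only [mem_iff_realize hS]
  constructor
  · intro h ψ hψ M
    exact (realize_conj l).mp (h M) ψ hψ
  · intro h M
    exact (realize_conj l).mpr fun ψ hψ => h ψ hψ M

/-- an `E`-closed family `𝒯` whose set of accumulation points is finite and
nonempty of size `n` is a disjoint union of `n` `e`-categorical subfamilies. -/
theorem partition_into_eCategorical
    {L : FirstOrder.Language.{u, v}} [L.IsRelational]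
    (𝒯 : Set L.Theory) (h𝒯 : ∀ S ∈ 𝒯, CompleteTheory S)
    (hclosed : ClE 𝒯 = 𝒯) (n : ℕ) (hn : 0 < n)
    (hfin : {T : L.Theory | AccPoint 𝒯 T}.Finite)
    (hcard : {T : L.Theory | AccPoint 𝒯 T}.ncard = n) :
    ∃ 𝒯s : Fin n → Set L.Theory,
      (∀ i j, i ≠ j → Disjoint (𝒯s i) (𝒯s j)) ∧
      (⋃ i, 𝒯s i) = 𝒯 ∧
      ∀ i, ∃! T : L.Theory, AccPoint (𝒯s i) T := by
  classical
  have hcardfin : hfin.toFinset.card = n := by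
    rw [← Set.ncard_eq_toFinset_card _ hfin]; exact hcard
  let e : hfin.toFinset ≃ Fin n := Finset.equivFinOfCardEq hcardfin
  set T : Fin n → L.Theory := fun i => ((e.symm i : hfin.toFinset) : L.Theory) with hT
  have hTacc : ∀ i, AccPoint 𝒯 (T i) := fun i => by
    have h2 := (e.symm i).2
    rw [Set.Finite.mem_toFinset] at h2
    exact h2
  have hTc : ∀ i, CompleteTheory (T i) := fun i => (hTacc i).1
  have hTinj : Function.Injective T := fun i j h => by
    have h2 : e.symm i = e.symm j := Subtype.ext h
    simpa using congrArg e h2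
  have hTsurj : ∀ U, AccPoint 𝒯 U → ∃ i, T i = U := fun U hU => by
    refine ⟨e ⟨U, hfin.mem_toFinset.mpr hU⟩, ?_⟩
    simp [hT]
  have hsubeq : ∀ S S' : L.Theory, CompleteTheory S → CompleteTheory S' → S ⊆ S' → S = S' := by
    intro S S' hS hS' hsub
    ext φ
    refine ⟨fun h => hsub h, fun h => ?_⟩
    by_contra h'
    exact ((not_mem_iff hS' φ).mp (hsub ((not_mem_iff hS φ).mpr h'))) h
  have hsep : ∀ i j : Fin n, ∃ ψ : L.Sentence, i ≠ j → ψ ∈ T i ∧ ψ ∉ T j := by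
    intro i j
    by_cases hij : i = j
    · exact ⟨⊤, fun h => absurd hij h⟩
    · have hne : ¬ T i ⊆ T j := fun hsub =>
        hij (hTinj (hsubeq _ _ (hTc i) (hTc j) hsub))
      obtain ⟨ψ, hψ1, hψ2⟩ := Set.not_subset.mp hne
      exact ⟨ψ, fun _ => ⟨hψ1, hψ2⟩⟩
  choose ψ hψ using hsep
  have htop : ∀ S : L.Theory, CompleteTheory S → (⊤ : L.Sentence) ∈ S := by
    intro S hS
    rw [mem_iff_realize hS]
    intro M
    exact Formula.realize_top.mpr trivial
  set φ' : Fin n → L.Sentence := fun i => conj (List.ofFn fun j => if j = i then ⊤ else ψ i j)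
    with hφ'
  have hφ'mem : ∀ (i) (S : L.Theory), CompleteTheory S →
      (φ' i ∈ S ↔ ∀ j, j ≠ i → ψ i j ∈ S) := by
    intro i S hS
    rw [hφ']
    rw [conj_mem_iff hS]
    constructor
    · intro h j hj
      have := h _ (List.mem_ofFn.mpr ⟨j, rfl⟩)
      simpa [if_neg hj] using this
    · intro h θ hθ
      obtain ⟨j, rfl⟩ := List.mem_ofFn.mp hθ
      by_cases hj : j = i
      · simpa [hj] using htop S hS
      · simpa [hj] using h j hj
  have hφ'self : ∀ i, φ' i ∈ T i := fun i =>
    (hφ'mem i _ (hTc i)).mpr fun j hj => (hψ i j (Ne.symm hj)).1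
  have hφ'not : ∀ i j, i ≠ j → φ' i ∉ T j := by
    intro i j hij h
    exact (hψ i j hij).2 ((hφ'mem i _ (hTc j)).mp h j (Ne.symm hij))
  set χ : Fin n → L.Sentence := fun i => conj (List.ofFn fun k =>
    if k = i then φ' i else if k < i then (φ' k).not else ⊤) with hχ
  have hχmem : ∀ (i) (S : L.Theory), CompleteTheory S →
      (χ i ∈ S ↔ (φ' i ∈ S ∧ ∀ k, k < i → φ' k ∉ S)) := by
    intro i S hS
    rw [hχ]
    rw [conj_mem_iff hS]
    constructor
    · intro h
      constructor
      · have := h _ (List.mem_ofFn.mpr ⟨i, rfl⟩)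
        simpa using this
      · intro k hk
        have hki : k ≠ i := ne_of_lt hk
        have := h _ (List.mem_ofFn.mpr ⟨k, rfl⟩)
        simp only [if_neg hki, if_pos hk] at this
        exact (not_mem_iff hS _).mp this
    · rintro ⟨h1, h2⟩ θ hθ
      obtain ⟨k, rfl⟩ := List.mem_ofFn.mp hθ
      by_cases hk : k = i
      · simpa [hk] using h1
      · by_cases hk' : k < i
        · simp only [if_neg hk, if_pos hk']
          exact (not_mem_iff hS _).mpr (h2 k hk')
        · simp only [if_neg hk, if_neg hk']
          exact htop S hS
  have hχself : ∀ i, χ i ∈ T i := fun i =>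
    (hχmem i _ (hTc i)).mpr ⟨hφ'self i, fun k hk => hφ'not k i (ne_of_lt hk)⟩
  have hχexcl : ∀ (S : L.Theory), CompleteTheory S → ∀ i j, i ≠ j → χ i ∈ S → χ j ∈ S → False := by
    intro S hS i j hij hi hj
    rcases lt_or_gt_of_ne hij with h | h
    · exact ((hχmem j S hS).mp hj).2 i h ((hχmem i S hS).mp hi).1
    · exact ((hχmem i S hS).mp hi).2 j h ((hχmem j S hS).mp hj).1
  let i0 : Fin n := ⟨0, hn⟩
  let P0 : Set L.Theory := {S | S ∈ 𝒯 ∧ ∀ j, j ≠ i0 → χ j ∉ S}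
  let Pi : Fin n → Set L.Theory := fun i => {S | S ∈ 𝒯 ∧ χ i ∈ S}
  let Ts : Fin n → Set L.Theory := fun i => if i = i0 then P0 else Pi i
  have hTs0 : Ts i0 = P0 := if_pos rfl
  have hTsne : ∀ i, i ≠ i0 → Ts i = Pi i := fun i h => if_neg h
  have hTscases : ∀ i, Ts i = P0 ∨ Ts i = Pi i := fun i => by
    by_cases h : i = i0
    · exact Or.inl (by rw [h, hTs0])
    · exact Or.inr (hTsne i h)
  have hP0sub : P0 ⊆ 𝒯 := fun S hS => hS.1
  have hPisub : ∀ i, Pi i ⊆ 𝒯 := fun i S hS => hS.1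
  have hTssub : ∀ i, Ts i ⊆ 𝒯 := fun i => by
    rcases hTscases i with h | h <;> rw [h]
    · exact hP0sub
    · exact hPisub i
  have hmem_piece : ∀ (i) (S : L.Theory), S ∈ 𝒯 → χ i ∈ S → S ∈ Ts i := by
    intro i S hSτ hSχ
    by_cases h : i = i0
    · subst h
      rw [hTs0]
      exact ⟨hSτ, fun j hj hjS => hχexcl S (h𝒯 S hSτ) j i0 hj hjS hSχ⟩
    · rw [hTsne i h]
      exact ⟨hSτ, hSχ⟩
  have hdisj : ∀ i j, i ≠ j → Disjoint (Ts i) (Ts j) := by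
    intro i j hij
    rw [Set.disjoint_left]
    intro S hSi hSj
    by_cases hi : i = i0
    · subst hi
      rw [hTs0] at hSi
      rw [hTsne j (Ne.symm hij)] at hSj
      exact hSi.2 j (Ne.symm hij) hSj.2
    · rw [hTsne i hi] at hSi
      by_cases hj : j = i0
      · subst hj
        rw [hTs0] at hSj
        exact hSj.2 i hi hSi.2
      · rw [hTsne j hj] at hSj
        exact hχexcl S (h𝒯 S hSi.1) i j hij hSi.2 hSj.2
  have hunion : (⋃ i, Ts i) = 𝒯 := by
    apply Set.Subset.antisymm
    · exact Set.iUnion_subset hTssub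
    · intro S hS
      by_cases h : ∃ j, j ≠ i0 ∧ χ j ∈ S
      · obtain ⟨j, hj, hjS⟩ := h
        exact Set.mem_iUnion.mpr ⟨j, by rw [hTsne j hj]; exact ⟨hS, hjS⟩⟩
      · push_neg at h
        exact Set.mem_iUnion.mpr ⟨i0, by rw [hTs0]; exact ⟨hS, h⟩⟩
  have haccTs : ∀ i, AccPoint (Ts i) (T i) := by
    intro i
    refine ⟨hTc i, fun θ hθ => ?_⟩
    have hmemθχ : conj [θ, χ i] ∈ T i := (conj_mem_iff (hTc i) _).mpr (by
      intro ρ hρ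
      simp only [List.mem_cons, List.not_mem_nil, or_false] at hρ
      rcases hρ with rfl | rfl
      · exact hθ
      · exact hχself i)
    have hinf := (hTacc i).2 _ hmemθχ
    refine hinf.mono ?_
    rintro S ⟨hSτ, hSm⟩
    have hSc := h𝒯 S hSτ
    have hboth := (conj_mem_iff hSc _).mp hSm
    have hθS : θ ∈ S := hboth θ (by simp)
    have hχS : χ i ∈ S := hboth (χ i) (by simp)
    exact ⟨hmem_piece i S hSτ hχS, hθS⟩
  have haccsub : ∀ i U, AccPoint (Ts i) U → AccPoint 𝒯 U := by
    intro i U hU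
    exact ⟨hU.1, fun θ hθ => (hU.2 θ hθ).mono (fun S hS => ⟨hTssub i hS.1, hS.2⟩)⟩
  refine ⟨Ts, hdisj, hunion, fun i => ⟨T i, haccTs i, ?_⟩⟩
  intro U hU
  obtain ⟨j, rfl⟩ := hTsurj U (haccsub i U hU)
  by_contra hne
  have hji : j ≠ i := fun h => hne (by rw [h])
  obtain ⟨S, hSi, hSχj⟩ := (hU.2 (χ j) (hχself j)).nonempty
  by_cases hi : i = i0
  · subst hi
    rw [hTs0] at hSi
    exact hSi.2 j hji hSχj
  · rw [hTsne i hi] at hSi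
    exact hχexcl S (h𝒯 S hSi.1) i j (Ne.symm hji) hSi.2 hSχj


end Approx
end
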